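/- arXiv:1410.4348 — 10 statements merged into one kernel-verified Lean document; each statement's English description precedes it below -/
import Mathlib

section
/- Let k be a field, v : Valuation k ℝ≥0 a (rank-one) valuation with values in the nonnegative reals, and A a commutative k-algebra that is an integral domain. Let q : A → ℝ≥0 satisfy q 0 = 0, q 1 = 1, and q (a*b) = q a * q b for all a, b ∈ A. Then the following are equivalent: (i) q (a + b) ≤ max (q a) (q b) for all a, b ∈ A and q (algebraMap k A λ) = v λ for all λ ∈ k (i.e. q is a valuation on A compatible with v); (ii) for every n ∈ ℕ and all families λ : Fin n → k and a : Fin n → A with ∑ i, (λ i) • (a i) = 0, either v (λ i) * q (a i) = 0 for all i, or there exist indices i ≠ j with v (λ i) * q (a i) = v (λ j) * q (a j) and v (λ l) * q (a l) ≤ v (λ i) * q (a i) for all l (the maximum of the valuated terms is attained at least twice). -/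
open scoped NNReal

set_option maxHeartbeats 1000000 in
/-- **Theorem A (affine, set-theoretic form).**
A multiplicative map `q : A → ℝ≥0` with `q 0 = 0`, `q 1 = 1` on an integral domain `A` over a
valued field `(k, v)` is a valuation compatible with `v` (i.e. a point of the Berkovich
analytification of `Spec A`) if and only if for every `k`-linear relation `∑ λᵢ • aᵢ = 0` in `A`,
the maximum of the tropicalized terms `v (λᵢ) * q (aᵢ)` is zero or attained at least twice
(i.e. `q` is a point of the set-theoretic tropicalization of `Spec A` with respect to the
universal embedding). -/
theorem universal_tropicalization_is_analytification
    {k : Type*} [Field k] (v : Valuation k ℝ≥0)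
    {A : Type*} [CommRing A] [IsDomain A] [Algebra k A]
    (q : A → ℝ≥0) (hq0 : q 0 = 0) (hq1 : q 1 = 1)
    (hqmul : ∀ a b : A, q (a * b) = q a * q b) :
    ((∀ a b : A, q (a + b) ≤ max (q a) (q b)) ∧
        ∀ lam : k, q (algebraMap k A lam) = v lam) ↔
      (∀ (n : ℕ) (lam : Fin n → k) (a : Fin n → A), (∑ i, lam i • a i) = 0 →
        (∀ i, v (lam i) * q (a i) = 0) ∨
          ∃ i j, i ≠ j ∧ v (lam i) * q (a i) = v (lam j) * q (a j) ∧
            ∀ l, v (lam l) * q (a l) ≤ v (lam i) * q (a i)) := by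
  have hqneg1 : q (-1) = 1 := by
    have h : q (-1) * q (-1) = 1 := by rw [← hqmul]; simp [hq1]
    have h' := NNReal.coe_inj.mpr h
    push_cast at h'
    have h0 : (0:ℝ) ≤ (q (-1) : ℝ) := (q (-1)).2
    have : ((q (-1) : ℝ)) = 1 := by nlinarith
    exact NNReal.coe_inj.mp (by push_cast; exact this)
  have hqneg : ∀ x : A, q (-x) = q x := by
    intro x
    rw [show (-x) = (-1) * x by ring, hqmul, hqneg1, one_mul]
  constructor
  · rintro ⟨hadd, hv⟩ n lam a hsum
    have hsumle : ∀ (s : Finset (Fin n)) (f : Fin n → A),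
        q (∑ i ∈ s, f i) ≤ s.sup fun i => q (f i) := by
      intro s f
      induction s using Finset.cons_induction with
      | empty => simp [hq0]
      | cons i s hi ih =>
        rw [Finset.sum_cons, Finset.sup_cons]
        exact (hadd _ _).trans (max_le_max le_rfl ih)
    have hg : ∀ i, q (lam i • a i) = v (lam i) * q (a i) := by
      intro i
      rw [Algebra.smul_def, hqmul, hv]
    rcases Nat.eq_zero_or_pos n with rfl | hn
    · exact Or.inl fun i => i.elim0
    have : Nonempty (Fin n) := ⟨⟨0, hn⟩⟩
    obtain ⟨i₀, -, hmax⟩ := Finset.exists_max_image Finset.univ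
      (fun i => v (lam i) * q (a i)) Finset.univ_nonempty
    simp only [Finset.mem_univ, forall_true_left] at hmax
    by_cases h0 : v (lam i₀) * q (a i₀) = 0
    · exact Or.inl fun i => le_antisymm (h0 ▸ hmax i) zero_le
    · have hex : ∃ j, j ≠ i₀ ∧ v (lam j) * q (a j) = v (lam i₀) * q (a i₀) := by
        by_contra hcon
        push_neg at hcon
        have hlt : ∀ j, j ≠ i₀ → v (lam j) * q (a j) < v (lam i₀) * q (a i₀) :=
          fun j hj => lt_of_le_of_ne (hmax j) (hcon j hj)
        have heq : lam i₀ • a i₀ = -∑ j ∈ Finset.univ.erase i₀, lam j • a j := by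
          have h := Finset.add_sum_erase Finset.univ (fun j => lam j • a j)
            (Finset.mem_univ i₀)
          rw [hsum] at h
          linear_combination h
        have hle : v (lam i₀) * q (a i₀) ≤
            (Finset.univ.erase i₀).sup fun j => q (lam j • a j) := by
          rw [← hg, heq, hqneg]
          exact hsumle _ _
        have hltsup : (Finset.univ.erase i₀).sup (fun j => q (lam j • a j))
            < v (lam i₀) * q (a i₀) := by
          rw [Finset.sup_lt_iff (pos_iff_ne_zero.mpr h0)]
          intro j hj
          rw [hg]
          exact hlt j (Finset.ne_of_mem_erase hj)
        exact absurd hle (not_le.mpr hltsup)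
      obtain ⟨j, hj, hjeq⟩ := hex
      exact Or.inr ⟨i₀, j, Ne.symm hj, hjeq.symm, hmax⟩
  · intro H
    have hv : ∀ lam : k, q (algebraMap k A lam) = v lam := by
      intro lam
      set lam' : Fin 2 → k := ![lam, -1] with hlam'
      set a' : Fin 2 → A := ![1, algebraMap k A lam] with ha'
      have e0 : v (lam' 0) * q (a' 0) = v lam := by
        simp [hlam', ha', hq1]
      have e1 : v (lam' 1) * q (a' 1) = q (algebraMap k A lam) := by
        simp [hlam', ha', Valuation.map_neg, v.map_one]
      have hsum : (∑ i : Fin 2, lam' i • a' i) = 0 := by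
        rw [Fin.sum_univ_two]
        simp [hlam', ha', Algebra.algebraMap_eq_smul_one]
      rcases H 2 lam' a' hsum with h | ⟨i, j, hij, heq, -⟩
      · have h0 := h 0
        have h1 := h 1
        rw [e0] at h0
        rw [e1] at h1
        rw [h1, h0]
      · fin_cases i <;> fin_cases j <;>
          first
            | exact absurd rfl hij
            | exact e1.symm.trans (heq.symm.trans e0)
            | exact e1.symm.trans (heq.trans e0)
    refine ⟨?_, hv⟩
    intro a b
    set lam' : Fin 3 → k := ![1, 1, -1] with hlam'
    set a' : Fin 3 → A := ![a, b, a + b] with ha'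
    have e0 : v (lam' 0) * q (a' 0) = q a := by simp [hlam', ha', v.map_one]
    have e1 : v (lam' 1) * q (a' 1) = q b := by simp [hlam', ha', v.map_one]
    have e2 : v (lam' 2) * q (a' 2) = q (a + b) := by
      simp [hlam', ha', Valuation.map_neg, v.map_one]
    have hsum : (∑ i : Fin 3, lam' i • a' i) = 0 := by
      rw [Fin.sum_univ_three]
      simp only [hlam', ha', Matrix.cons_val_zero, Matrix.cons_val_one,
        Matrix.head_cons, Matrix.cons_val_two, Matrix.tail_cons, one_smul, neg_smul]
      ring
    rcases H 3 lam' a' hsum with h | ⟨i, j, hij, heq, hmax⟩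
    · have h0 := h 0; have h1 := h 1; have h2 := h 2
      rw [e0] at h0; rw [e1] at h1; rw [e2] at h2
      rw [h2]
      exact zero_le
    · have h2 := hmax 2
      rw [e2] at h2
      fin_cases i <;> fin_cases j <;>
        first
          | exact absurd rfl hij
          | exact le_max_of_le_left (le_of_le_of_eq h2 e0)
          | exact le_max_of_le_right (le_of_le_of_eq h2 e1)
          | exact le_max_of_le_left (le_of_le_of_eq h2 (heq.trans e0))
          | exact le_max_of_le_right (le_of_le_of_eq h2 (heq.trans e1))
end

section
/- Let R be a commutative ring, S an idempotent semiring, ν : R → S a generalized valuation, and A a commutative R-algebra that is an integral domain. Let T be a commutative semiring together with a semiring homomorphism ι : S → T. Let α : A → T satisfy α 0 = 0, α 1 = 1, and α (a*b) = α a * α b for all a, b ∈ A. Then the following are equivalent: (a) for every f ∈ ker ev (f a finitely supported function A → R with ∑_{a ∈ supp f} (f a) • a = 0) and every a₀ ∈ supp f, one has ∑_{a ∈ supp f} ι (ν (f a)) * α a = ∑_{a ∈ supp f, a ≠ a₀} ι (ν (f a)) * α a (all bend relations of the coefficientwise valuation of f hold under α); (b) α (r • a) = ι (ν r) * α a for all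 r ∈ R, a ∈ A, and α a + α b + α (a+b) = α a + α b for all a, b ∈ A (i.e. α is a valuation on A compatible with ν). -/
/-- **Moduli of valuations (affine computational content).**
Let `ν : R → S` be a generalized valuation into an idempotent semiring, `A` an integral
`R`-algebra, and `ι : S → T` a homomorphism of semirings.  A multiplicative map `α : A → T`
satisfies all the bend relations of the coefficientwise valuations of elements of the kernel of
the evaluation map `ev : MonoidAlgebra R A → A` if and only if `α` is a valuation on `A`
compatible with `ν`. -/
theorem bend_relations_iff_valuation
    {R S A T : Type*} [CommRing R] [CommSemiring S] [CommRing A] [IsDomain A] [Algebra R A] [DecidableEq A]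
    [CommSemiring T]
    (hS : ∀ s : S, s + s = s)
    (ν : R → S) (hν0 : ν 0 = 0) (hν1 : ν 1 = 1)
    (hνmul : ∀ a b : R, ν (a * b) = ν a * ν b)
    (hνneg : ∀ a : R, ν (-a) = ν a)
    (hνadd : ∀ a b : R, ν (a + b) + ν a + ν b = ν a + ν b)
    (ι : S →+* T)
    (α : A → T) (hα0 : α 0 = 0) (hα1 : α 1 = 1)
    (hαmul : ∀ a b : A, α (a * b) = α a * α b) :
    (∀ f : MonoidAlgebra R A,
        MonoidAlgebra.lift R A A (MonoidHom.id A) f = 0 →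
        ∀ a₀ ∈ f.coeff.support,
          (∑ a ∈ f.coeff.support, ι (ν (f.coeff a)) * α a) =
            ∑ a ∈ f.coeff.support.erase a₀, ι (ν (f.coeff a)) * α a) ↔
      ((∀ (r : R) (a : A), α (r • a) = ι (ν r) * α a) ∧
        ∀ a b : A, α a + α b + α (a + b) = α a + α b) := by
  have hT1 : (1 : T) + 1 = 1 := by
    rw [← map_one ι, ← map_add, hS]
  have hT : ∀ t : T, t + t = t := fun t => by
    rw [← one_mul t, ← add_mul, hT1, one_mul]
  have hνm1 : ν (-1 : R) = 1 := by rw [hνneg, hν1]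
  by_cases hR : (1 : R) = 0
  · -- then T is trivial and everything holds
    have hT0 : (1 : T) = 0 := by rw [← map_one ι, ← hν1, hR, hν0, map_zero]
    have hTsub : ∀ t u : T, t = u := fun t u => by
      calc t = t * 1 := (mul_one t).symm
        _ = 0 := by rw [hT0, mul_zero]
        _ = u * 1 := by rw [hT0, mul_zero]
        _ = u := mul_one u
    constructor
    · intro _; exact ⟨fun _ _ => hTsub _ _, fun _ _ => hTsub _ _⟩
    · intro _ f _ a₀ _; exact hTsub _ _
  constructor
  · intro hbend
    -- one-point bend relation
    have bend1 : ∀ (c : R) (x : A), c ≠ 0 → c • x = 0 → ι (ν c) * α x = 0 := by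
      intro c x hc hcx
      have hsupp : (MonoidAlgebra.single x c : MonoidAlgebra R A).coeff.support = {x} :=
        Finsupp.support_single_ne_zero x hc
      have h0 : MonoidAlgebra.lift R A A (MonoidHom.id A) (MonoidAlgebra.single x c) = 0 := by
        rw [MonoidAlgebra.lift_single]; simpa using hcx
      have key := hbend _ h0 x (by rw [hsupp]; exact Finset.mem_singleton_self x)
      rw [hsupp] at key
      simpa [MonoidAlgebra.coeff_single, Finsupp.single_eq_same] using key
    -- two-point bend relation
    have bend2 : ∀ (c d : R) (x y : A), c ≠ 0 → d ≠ 0 → x ≠ y →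
        c • x + d • y = 0 → ι (ν c) * α x = ι (ν d) * α y := by
      intro c d x y hc hd hxy h
      set f : MonoidAlgebra R A := MonoidAlgebra.single x c + MonoidAlgebra.single y d with hf
      have hdisj : Disjoint (MonoidAlgebra.single x c : MonoidAlgebra R A).coeff.support
          (MonoidAlgebra.single y d : MonoidAlgebra R A).coeff.support := by
        rw [MonoidAlgebra.coeff_single, MonoidAlgebra.coeff_single,
          Finsupp.support_single_ne_zero x hc, Finsupp.support_single_ne_zero y hd]
        exact Finset.disjoint_singleton.mpr hxy
      have hsupp : f.coeff.support = {x, y} := by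
        rw [hf, MonoidAlgebra.coeff_add, Finsupp.support_add_eq hdisj, MonoidAlgebra.coeff_single,
          MonoidAlgebra.coeff_single, Finsupp.support_single_ne_zero x hc,
          Finsupp.support_single_ne_zero y hd]
        rfl
      have hfx : f.coeff x = c := by
        rw [hf, MonoidAlgebra.coeff_add, Finsupp.add_apply]
        simp [MonoidAlgebra.coeff_single, Finsupp.single_apply, Ne.symm hxy]
      have hfy : f.coeff y = d := by
        rw [hf, MonoidAlgebra.coeff_add, Finsupp.add_apply]
        simp [MonoidAlgebra.coeff_single, Finsupp.single_apply, hxy]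
      have h0 : MonoidAlgebra.lift R A A (MonoidHom.id A) f = 0 := by
        rw [hf, map_add, MonoidAlgebra.lift_single, MonoidAlgebra.lift_single]
        simpa using h
      have hxS : x ∈ f.coeff.support := by rw [hsupp]; simp
      have hyS : y ∈ f.coeff.support := by rw [hsupp]; simp
      have hxny : x ∉ ({y} : Finset A) := by simpa using hxy
      have key1 := hbend f h0 x hxS
      have key2 := hbend f h0 y hyS
      rw [hsupp] at key1 key2
      rw [Finset.erase_insert hxny] at key1
      have herase2 : ({x, y} : Finset A).erase y = {x} := by
        rw [Finset.erase_insert_of_ne hxy, Finset.erase_singleton]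
        rfl
      rw [herase2] at key2
      simp only [Finset.sum_insert hxny, Finset.sum_singleton, hfx, hfy] at key1 key2
      rw [← key2, key1]
    -- three-point bend relation with coefficients 1, 1, -1
    have bend3 : ∀ x y z : A, x ≠ y → x ≠ z → y ≠ z →
        x + y - z = 0 → α x + α y + α z = α x + α y := by
      intro x y z hxy hxz hyz h
      set f : MonoidAlgebra R A := MonoidAlgebra.single x 1 + MonoidAlgebra.single y 1
        + MonoidAlgebra.single z (-1) with hf
      have h1 : (1 : R) ≠ 0 := hR
      have hm1 : (-1 : R) ≠ 0 := by simpa using hR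
      have hdisj1 : Disjoint (MonoidAlgebra.single x 1 : MonoidAlgebra R A).coeff.support
          (MonoidAlgebra.single y 1 : MonoidAlgebra R A).coeff.support := by
        rw [MonoidAlgebra.coeff_single, MonoidAlgebra.coeff_single,
          Finsupp.support_single_ne_zero x h1, Finsupp.support_single_ne_zero y h1]
        exact Finset.disjoint_singleton.mpr hxy
      have hsupp12 : (MonoidAlgebra.single x 1 + MonoidAlgebra.single y 1 :
          MonoidAlgebra R A).coeff.support = {x, y} := by
        rw [MonoidAlgebra.coeff_add, Finsupp.support_add_eq hdisj1, MonoidAlgebra.coeff_single,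
          MonoidAlgebra.coeff_single, Finsupp.support_single_ne_zero x h1,
          Finsupp.support_single_ne_zero y h1]
        rfl
      have hdisj2 : Disjoint (MonoidAlgebra.single x 1 + MonoidAlgebra.single y 1 :
          MonoidAlgebra R A).coeff.support
          (MonoidAlgebra.single z (-1) : MonoidAlgebra R A).coeff.support := by
        rw [hsupp12, MonoidAlgebra.coeff_single, Finsupp.support_single_ne_zero z hm1]
        simp [Finset.disjoint_singleton_right, Ne.symm hxz, Ne.symm hyz]
      have hsupp : f.coeff.support = {x, y, z} := by
        rw [hf, MonoidAlgebra.coeff_add, Finsupp.support_add_eq hdisj2, hsupp12,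
          MonoidAlgebra.coeff_single, Finsupp.support_single_ne_zero z hm1]
        ext w; simp [or_assoc]
      have hfx : f.coeff x = 1 := by
        rw [hf, MonoidAlgebra.coeff_add, MonoidAlgebra.coeff_add, Finsupp.add_apply, Finsupp.add_apply]
        simp [MonoidAlgebra.coeff_single, Finsupp.single_apply, Ne.symm hxy, Ne.symm hxz]
      have hfy : f.coeff y = 1 := by
        rw [hf, MonoidAlgebra.coeff_add, MonoidAlgebra.coeff_add, Finsupp.add_apply, Finsupp.add_apply]
        simp [MonoidAlgebra.coeff_single, Finsupp.single_apply, hxy, Ne.symm hyz]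
      have hfz : f.coeff z = -1 := by
        rw [hf, MonoidAlgebra.coeff_add, MonoidAlgebra.coeff_add, Finsupp.add_apply, Finsupp.add_apply]
        simp [MonoidAlgebra.coeff_single, Finsupp.single_apply, hxz, hyz]
      have h0 : MonoidAlgebra.lift R A A (MonoidHom.id A) f = 0 := by
        rw [hf, map_add, map_add, MonoidAlgebra.lift_single, MonoidAlgebra.lift_single,
          MonoidAlgebra.lift_single]
        simp only [MonoidHom.id_apply, one_smul, neg_smul]
        rw [← sub_eq_add_neg]; exact h
      have hzS : z ∈ f.coeff.support := by rw [hsupp]; simp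
      have key := hbend f h0 z hzS
      rw [hsupp] at key
      have hxyz : x ∉ ({y, z} : Finset A) := by simp [hxy, hxz]
      have hyz' : y ∉ ({z} : Finset A) := by simpa using hyz
      have hxny : x ∉ ({y} : Finset A) := by simpa using hxy
      have herase : ({x, y, z} : Finset A).erase z = {x, y} := by
        rw [Finset.erase_insert_of_ne hxz, Finset.erase_insert_of_ne hyz,
          Finset.erase_singleton]
        rfl
      rw [herase] at key
      rw [Finset.sum_insert hxyz, Finset.sum_insert hyz', Finset.sum_singleton,
        Finset.sum_insert hxny, Finset.sum_singleton, hfx, hfy, hfz, hν1, hνm1,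
        map_one, one_mul, one_mul, one_mul] at key
      rw [add_assoc]
      exact key
    have hscale : ∀ (r : R) (a : A), α (r • a) = ι (ν r) * α a := by
      intro r a
      by_cases hr : r = 0
      · simp [hr, hν0, hα0]
      by_cases hra : r • a = a
      · by_cases hr1 : r = 1
        · rw [hra, hr1, hν1, map_one, one_mul]
        · by_cases ha : a = 0
          · simp [ha, hα0]
          · have h1 : algebraMap R A r = 1 := by
              have h2 : (algebraMap R A r - 1) * a = 0 := by
                rw [sub_mul, one_mul, ← Algebra.smul_def, hra, sub_self]
              rcases mul_eq_zero.mp h2 with h | h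
              · exact sub_eq_zero.mp h
              · exact absurd h ha
            have hkey : (r - 1) • (1 : A) = 0 := by
              rw [Algebra.smul_def, map_sub, h1, map_one, sub_self, zero_mul]
            have h2 : ι (ν (r - 1)) = 0 := by
              have := bend1 (r - 1) 1 (sub_ne_zero.mpr hr1) hkey
              rwa [hα1, mul_one] at this
            have e1 : ι (ν r) + 1 = 1 := by
              have h3 := congrArg ι (hνadd 1 (r - 1))
              have h4 : (1 : R) + (r - 1) = r := by ring
              rw [h4] at h3
              simpa [hν1, h2] using h3
            have e2 : (1 : T) + ι (ν r) = ι (ν r) := by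
              have h3 := congrArg ι (hνadd r (1 - r))
              have h4 : r + (1 - r) = 1 := by ring
              have h6 : (1 : R) - r = -(r - 1) := by ring
              have h5 : ν (1 - r) = ν (r - 1) := by rw [h6, hνneg]
              rw [h4, h5] at h3
              simpa [hν1, h2] using h3
            have hone : ι (ν r) = 1 := by
              calc ι (ν r) = 1 + ι (ν r) := e2.symm
                _ = ι (ν r) + 1 := add_comm _ _
                _ = 1 := e1
            rw [hra, hone, one_mul]
      · have hev : (1 : R) • (r • a) + (-r) • a = 0 := by
          rw [one_smul, neg_smul, add_neg_cancel]
        have := bend2 1 (-r) (r • a) a hR (neg_ne_zero.mpr hr) hra hev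
        rwa [hν1, map_one, one_mul, hνneg] at this
    refine ⟨hscale, ?_⟩
    intro a b
    by_cases ha : a = 0
    · simp [ha, hα0, hT]
    by_cases hb : b = 0
    · simp [hb, hα0, hT]
    by_cases hab : a + b = 0
    · rw [hab, hα0, add_zero]
    by_cases haeb : a = b
    · subst haeb
      have h2a : α (a + a) = ι (ν 2) * α a := by
        rw [← two_smul R a, hscale]
      have hν2 : ι (ν 2) + 1 = 1 := by
        have h3 := congrArg ι (hνadd 1 1)
        have h4 : (1 : R) + 1 = 2 := by norm_num
        rw [h4] at h3
        simp only [map_add, hν1, map_one] at h3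
        rwa [add_assoc, hT1] at h3
      rw [h2a, hT (α a)]
      calc α a + ι (ν 2) * α a = (1 + ι (ν 2)) * α a := by ring
        _ = α a := by rw [add_comm 1 (ι (ν 2)), hν2, one_mul]
    · have hab1 : a ≠ a + b := fun h => hb (left_eq_add.mp h)
      have hab2 : b ≠ a + b := fun h => ha (right_eq_add.mp h)
      exact bend3 a b (a + b) haeb hab1 hab2 (by ring)
  · rintro ⟨hscale, hadd⟩ f hf a₀ ha₀
    have hαneg : ∀ x : A, α (-x) = α x := fun x => by
      have hx : (-1 : R) • x = -x := by simp
      rw [← hx, hscale, hνm1, map_one, one_mul]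
    have hsub : ∀ (s : Finset A) (g : A → A),
        α (∑ x ∈ s, g x) + ∑ x ∈ s, α (g x) = ∑ x ∈ s, α (g x) := by
      intro s g
      induction s using Finset.induction_on with
      | empty => simp [hα0]
      | @insert x s hx ih =>
        rw [Finset.sum_insert hx, Finset.sum_insert hx]
        set S := ∑ y ∈ s, g y
        set Sa := ∑ y ∈ s, α (g y)
        have h1 : α (g x + S) + (α (g x) + α S) = α (g x) + α S := by
          calc α (g x + S) + (α (g x) + α S) = α (g x) + α S + α (g x + S) := by ring
            _ = α (g x) + α S := hadd (g x) S
        have h2 : (α (g x) + α S) + (α (g x) + Sa) = α (g x) + Sa := by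
          calc (α (g x) + α S) + (α (g x) + Sa)
              = (α (g x) + α (g x)) + (α S + Sa) := by ring
            _ = α (g x) + Sa := by rw [hT, ih]
        calc α (g x + S) + (α (g x) + Sa)
            = α (g x + S) + ((α (g x) + α S) + (α (g x) + Sa)) := by rw [h2]
          _ = (α (g x + S) + (α (g x) + α S)) + (α (g x) + Sa) := by ring
          _ = (α (g x) + α S) + (α (g x) + Sa) := by rw [h1]
          _ = α (g x) + Sa := h2
    have hev : ∑ x ∈ f.coeff.support, f.coeff x • x = 0 := by
      have h := hf
      rw [MonoidAlgebra.lift_apply] at h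
      simpa [Finsupp.sum] using h
    have key : f.coeff a₀ • a₀ = -∑ x ∈ f.coeff.support.erase a₀, f.coeff x • x := by
      apply eq_neg_of_add_eq_zero_left
      exact (Finset.add_sum_erase f.coeff.support (fun x => f.coeff x • x) ha₀).trans hev
    have hterm : ι (ν (f.coeff a₀)) * α a₀ = α (∑ x ∈ f.coeff.support.erase a₀, f.coeff x • x) := by
      rw [← hscale, key, hαneg]
    have habs : α (∑ x ∈ f.coeff.support.erase a₀, f.coeff x • x)
        + ∑ x ∈ f.coeff.support.erase a₀, ι (ν (f.coeff x)) * α x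
        = ∑ x ∈ f.coeff.support.erase a₀, ι (ν (f.coeff x)) * α x := by
      have h := hsub (f.coeff.support.erase a₀) (fun x => f.coeff x • x)
      have hcongr : ∑ x ∈ f.coeff.support.erase a₀, α (f.coeff x • x)
          = ∑ x ∈ f.coeff.support.erase a₀, ι (ν (f.coeff x)) * α x :=
        Finset.sum_congr rfl fun x _ => hscale _ _
      rw [hcongr] at h
      exact h
    rw [← Finset.add_sum_erase _ _ ha₀, hterm]
    exact habs
end

section
/- Let R be a commutative ring, S an idempotent semiring, ν : R → S a generalized valuation, and A a commutative R-algebra that is an integral domain. Let C be the congruence (RingCon) on MonoidAlgebra S A generated by all pairs (ν_* f, (ν_* f).erase m) for f ∈ ker ev and m ∈ A, and let Q := (MonoidAlgebra S A) ⧸ C be the quotient semiring. Then for every commutative semiring T and every semiring homomorphism ι : S → T, there is a bijection between (1) the set of semiring homomorphisms h : Q → T satisfying h [single 1 s] = ι s for all s ∈ S (where [·] denotes the class in Q), and (2) the set of maps α : A → T with α 0 = 0, α 1 = 1, α (a*b) = α a * α b, α (r • a) = ι (ν r) * α a for all r ∈ R, a ∈ A, and α a + α b + α (a+b) = α a + α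 b for all a, b ∈ A; the bijection sends h to the map a ↦ h [single a 1]. -/
open Finsupp MonoidAlgebra

/-- Sum formula for ring homs out of a monoid algebra determined on singles. -/
private lemma aux_sum {S A T : Type*} [CommSemiring S] [Monoid A] [CommSemiring T]
    (ι : S →+* T) (φ : MonoidAlgebra S A →+* T) (F : A → T)
    (hφ : ∀ a s, φ (MonoidAlgebra.single a s) = ι s * F a) (g : MonoidAlgebra S A) :
    φ g = g.coeff.sum fun a s => ι s * F a := by
  induction g using MonoidAlgebra.induction with
  | zero => simp
  | single_add a b f ha hb ih =>
      rw [map_add, ih, hφ, MonoidAlgebra.coeff_add, MonoidAlgebra.coeff_single,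
        Finsupp.sum_add_index' (fun a => by simp) (fun a b₁ b₂ => by rw [map_add, add_mul]),
        Finsupp.sum_single_index (by simp)]

private lemma aux_erase {S A : Type*} [Semiring S] (m : A) (x : MonoidAlgebra S A) :
    x.erase m = MonoidAlgebra.ofCoeff (x.coeff.erase m) := rfl

/-- mapRange distributes over pointwise-disjoint sums without additivity of the map. -/
private lemma aux_disj {M N ι' : Type*} [AddZeroClass M] [AddZeroClass N]
    (ν : M → N) (h0 : ν 0 = 0) (f g : ι' →₀ M) (h : ∀ i, f i = 0 ∨ g i = 0) :
    Finsupp.mapRange ν h0 (f + g) = Finsupp.mapRange ν h0 f + Finsupp.mapRange ν h0 g := by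
  ext i
  rcases h i with h' | h' <;>
    simp [Finsupp.mapRange_apply, Finsupp.add_apply, h', h0]

private lemma aux_disj_single {M ι' : Type*} [AddZeroClass M] {x y : ι'} (hxy : x ≠ y)
    (r t : M) : ∀ i, (Finsupp.single x r) i = 0 ∨ (Finsupp.single y t) i = 0 := by
  intro i
  by_cases hx : x = i
  · right; subst hx; exact Finsupp.single_eq_of_ne' (Ne.symm hxy)
  · left; exact Finsupp.single_eq_of_ne' hx

/-- Absorption: the valuation of a sum is absorbed by the sum of the valuations. -/
private lemma aux_absorb {A T ι' : Type*} [AddCommMonoid A] [CommSemiring T]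
    (α : A → T) (hα0 : α 0 = 0)
    (hadd : ∀ a b : A, α a + α b + α (a + b) = α a + α b)
    (s : Finset ι') (g : ι' → A) :
    α (∑ i ∈ s, g i) + ∑ i ∈ s, α (g i) = ∑ i ∈ s, α (g i) := by
  classical
  induction s using Finset.induction_on with
  | empty => simp [hα0]
  | insert j t hj ih =>
      rw [Finset.sum_insert hj, Finset.sum_insert hj]
      calc α (g j + ∑ i ∈ t, g i) + (α (g j) + ∑ i ∈ t, α (g i))
          = α (g j + ∑ i ∈ t, g i) + (α (g j) + (α (∑ i ∈ t, g i) + ∑ i ∈ t, α (g i))) := by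
            rw [ih]
        _ = (α (g j) + α (∑ i ∈ t, g i) + α (g j + ∑ i ∈ t, g i)) + ∑ i ∈ t, α (g i) := by
            ring
        _ = (α (g j) + α (∑ i ∈ t, g i)) + ∑ i ∈ t, α (g i) := by rw [hadd]
        _ = α (g j) + (α (∑ i ∈ t, g i) + ∑ i ∈ t, α (g i)) := by ring
        _ = α (g j) + ∑ i ∈ t, α (g i) := by rw [ih]

/-- Key fact: a sum of valuations of elements summing to zero absorbs each single term. -/
private lemma aux_key {A T ι' : Type*} [AddCommGroup A] [CommSemiring T] [DecidableEq ι']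
    (α : A → T) (hα0 : α 0 = 0)
    (hadd : ∀ a b : A, α a + α b + α (a + b) = α a + α b)
    (hneg : ∀ a : A, α (-a) = α a)
    (s : Finset ι') (g : ι' → A) (hsum : ∑ i ∈ s, g i = 0) (m : ι') :
    ∑ i ∈ s, α (g i) = ∑ i ∈ s.erase m, α (g i) := by
  by_cases hm : m ∈ s
  · have h1 : g m + ∑ i ∈ s.erase m, g i = 0 := by
      rw [Finset.add_sum_erase s g hm]; exact hsum
    have h2 : ∑ i ∈ s.erase m, g i = -(g m) := by
      exact eq_neg_of_add_eq_zero_right h1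
    have h3 := aux_absorb α hα0 hadd (s.erase m) g
    rw [h2, hneg] at h3
    rw [← Finset.add_sum_erase s (fun i => α (g i)) hm, h3]
  · rw [Finset.erase_eq_of_notMem hm]

/-- **The universal tropicalization represents the moduli functor of valuations (affine case).**
Let `ν : R → S` be a generalized valuation into an idempotent semiring and `A` an integral
`R`-algebra.  Let `C` be the congruence on `MonoidAlgebra S A` generated by the bend relations
of the coefficientwise valuations of the elements of the kernel of the evaluation map
`ev : MonoidAlgebra R A → A`, and `Q` the quotient semiring (the semiring of functions on the
universal tropicalization of `Spec A`).  Then for any semiring homomorphism `ι : S → T`, the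
`S`-algebra homomorphisms `Q → T` correspond bijectively to the valuations `A → T`
compatible with `ν`, via `h ↦ (a ↦ h [xₐ])`. -/
theorem universal_tropicalization_represents_valuations
    {R S A T : Type*} [CommRing R] [CommSemiring S] [CommRing A] [IsDomain A] [Algebra R A]
    [CommSemiring T]
    (hS : ∀ s : S, s + s = s)
    (ν : R → S) (hν0 : ν 0 = 0) (hν1 : ν 1 = 1)
    (hνmul : ∀ a b : R, ν (a * b) = ν a * ν b)
    (hνneg : ∀ a : R, ν (-a) = ν a)
    (hνadd : ∀ a b : R, ν (a + b) + ν a + ν b = ν a + ν b)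
    (ι : S →+* T)
    (C : RingCon (MonoidAlgebra S A))
    (hC : C = ringConGen (fun (p q : MonoidAlgebra S A) =>
      ∃ f : MonoidAlgebra R A, MonoidAlgebra.lift R A A (MonoidHom.id A) f = 0 ∧
        ∃ m : A, p = MonoidAlgebra.ofCoeff (Finsupp.mapRange ν hν0 f.coeff) ∧
          q = (MonoidAlgebra.ofCoeff (Finsupp.mapRange ν hν0 f.coeff)).erase m)) :
    ∃ e : {h : C.Quotient →+* T //
            ∀ s : S, h (C.mk' (MonoidAlgebra.single (1 : A) s)) = ι s} ≃
          {α : A → T // α 0 = 0 ∧ α 1 = 1 ∧ (∀ a b : A, α (a * b) = α a * α b) ∧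
            (∀ (r : R) (a : A), α (r • a) = ι (ν r) * α a) ∧
            ∀ a b : A, α a + α b + α (a + b) = α a + α b},
      ∀ h, (e h : A → T) = fun a => (h : C.Quotient →+* T) (C.mk' (MonoidAlgebra.single a 1)) := by
  classical
  -- the evaluation map as a sum
  have hev : ∀ f : MonoidAlgebra R A,
        MonoidAlgebra.lift R A A (MonoidHom.id A) f = ∑ i ∈ f.coeff.support, f.coeff i • i := by
    intro f
    have : MonoidAlgebra.lift R A A (MonoidHom.id A) f = f.coeff.sum fun a r => r • a := by
      induction f using MonoidAlgebra.induction with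
      | zero => simp
      | single_add a b f ha hb ih =>
          rw [map_add, ih, MonoidAlgebra.lift_single, MonoidAlgebra.coeff_add,
            MonoidAlgebra.coeff_single,
            Finsupp.sum_add_index' (fun a => by simp) (fun a b₁ b₂ => add_smul b₁ b₂ a),
            Finsupp.sum_single_index (zero_smul R a)]
          rfl
    rw [this]; rfl
  -- erase commutes with mapRange
  have hre : ∀ (f : MonoidAlgebra R A) (m : A),
        (MonoidAlgebra.ofCoeff (Finsupp.mapRange ν hν0 f.coeff)).erase m =
          MonoidAlgebra.ofCoeff (Finsupp.mapRange ν hν0 (f.erase m).coeff) := by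
    intro f m
    rw [aux_erase, MonoidAlgebra.coeff_ofCoeff, MonoidAlgebra.coeff_erase]
    congr 1
    ext i
    by_cases him : i = m
    · subst him; simp [Finsupp.mapRange_apply, hν0]
    · simp [Finsupp.mapRange_apply, Finsupp.erase_ne him]
  ------------------------------------------------------------------
  -- FORWARD: properties of α from a hom on the quotient
  ------------------------------------------------------------------
  have forward : ∀ (h : C.Quotient →+* T),
      (∀ s : S, h (C.mk' (MonoidAlgebra.single (1 : A) s)) = ι s) →
      (let α : A → T := fun a => h (C.mk' (MonoidAlgebra.single a 1));
        α 0 = 0 ∧ α 1 = 1 ∧ (∀ a b : A, α (a * b) = α a * α b) ∧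
        (∀ (r : R) (a : A), α (r • a) = ι (ν r) * α a) ∧
        ∀ a b : A, α a + α b + α (a + b) = α a + α b) := by
    intro h hh
    intro α
    set φ : MonoidAlgebra S A →+* T := h.comp C.mk' with hφdef
    have hφα : ∀ a : A, φ (MonoidAlgebra.single a 1) = α a := fun a => rfl
    have hψ : ∀ (a : A) (s : S), φ (MonoidAlgebra.single a s) = ι s * α a := by
      intro a s
      have : MonoidAlgebra.single (1 : A) s * MonoidAlgebra.single a (1 : S)
          = MonoidAlgebra.single a s := by
        rw [MonoidAlgebra.single_mul_single, one_mul, mul_one]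
      rw [← this, map_mul]
      congr 1
      exact hh s
    have hrel : ∀ f : MonoidAlgebra R A,
        MonoidAlgebra.lift R A A (MonoidHom.id A) f = 0 → ∀ m : A,
          φ (MonoidAlgebra.ofCoeff (Finsupp.mapRange ν hν0 f.coeff)) =
            φ ((MonoidAlgebra.ofCoeff (Finsupp.mapRange ν hν0 f.coeff)).erase m) := by
      intro f hf m
      have hrel' : C (MonoidAlgebra.ofCoeff (Finsupp.mapRange ν hν0 f.coeff))
          ((MonoidAlgebra.ofCoeff (Finsupp.mapRange ν hν0 f.coeff)).erase m) := by
        rw [hC]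
        exact RingConGen.Rel.of _ _ ⟨f, hf, m, rfl, rfl⟩
      exact congrArg h ((C.eq).mpr hrel')
    -- idempotency of addition in the image
    have tplus : ∀ g : MonoidAlgebra S A, φ g + φ g = φ g := by
      intro g
      rw [← map_add]
      congr 1
      ext i
      rw [MonoidAlgebra.coeff_add, Finsupp.add_apply]
      exact hS _
    have tplusα : ∀ a : A, α a + α a = α a := fun a => tplus (MonoidAlgebra.single a 1)
    -- α 0 = 0
    have hα0 : α 0 = 0 := by
      have := hrel (MonoidAlgebra.single (0 : A) (1 : R)) (by simp) 0
      rw [MonoidAlgebra.coeff_single, Finsupp.mapRange_single, hν1,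
        MonoidAlgebra.ofCoeff_single] at this
      rw [MonoidAlgebra.erase_single, map_zero] at this
      rw [← hφα 0]
      exact this
    -- α 1 = 1
    have hα1 : α 1 = 1 := by
      rw [← hφα 1]
      show φ (MonoidAlgebra.single 1 1) = 1
      rw [← MonoidAlgebra.one_def, map_one]
    -- multiplicativity
    have hαmul : ∀ a b : A, α (a * b) = α a * α b := by
      intro a b
      rw [← hφα (a*b), ← hφα a, ← hφα b, ← map_mul]
      congr 1
      rw [MonoidAlgebra.single_mul_single, one_mul]
    -- smul compatibility
    have hαsmul : ∀ (r : R) (a : A), α (r • a) = ι (ν r) * α a := by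
      intro r a
      by_cases hx : r • a = a
      · -- degenerate case
        have e0 : ι (ν (r - 1)) * α a = 0 := by
          have hf : MonoidAlgebra.lift R A A (MonoidHom.id A)
              (MonoidAlgebra.single a (r - 1)) = 0 := by
            simp only [MonoidAlgebra.lift_single, MonoidHom.id_apply]
            rw [sub_smul, one_smul, hx, sub_self]
          have := hrel _ hf a
          rw [MonoidAlgebra.coeff_single, Finsupp.mapRange_single,
            MonoidAlgebra.ofCoeff_single] at this
          rw [MonoidAlgebra.erase_single, map_zero, hψ] at this
          exact this
        have e1 : ι (ν r) * α a + α a = α a := by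
          have h1 : (ι (ν ((r-1)+1)) + ι (ν (r-1)) + ι (ν 1)) * α a
              = (ι (ν (r-1)) + ι (ν 1)) * α a := by
            rw [← map_add, ← map_add, ← map_add, hνadd]
          rw [show r - 1 + 1 = r from by ring, hν1, map_one, add_mul, add_mul, add_mul,
            one_mul, e0, add_zero, zero_add] at h1
          exact h1
        have e0' : ι (ν (1 - r)) * α a = 0 := by
          rw [show (1 : R) - r = -(r-1) from by ring, hνneg]
          exact e0
        have e2 : α a + ι (ν r) * α a = ι (ν r) * α a := by
          have h1 : (ι (ν (r+(1-r))) + ι (ν r) + ι (ν (1-r))) * α a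
              = (ι (ν r) + ι (ν (1-r))) * α a := by
            rw [← map_add, ← map_add, ← map_add, hνadd]
          rw [show r + (1 - r) = 1 from by ring, hν1, map_one, add_mul, add_mul, add_mul,
            one_mul, e0', add_zero, add_zero] at h1
          exact h1
        have : α a = ι (ν r) * α a := by
          calc α a = ι (ν r) * α a + α a := e1.symm
            _ = α a + ι (ν r) * α a := by ring
            _ = ι (ν r) * α a := e2
        rw [hx]
        exact this
      · -- generic case
        set x := r • a with hxdef
        have hf : MonoidAlgebra.lift R A A (MonoidHom.id A)
            (MonoidAlgebra.single x (1 : R) + MonoidAlgebra.single a (-r)) = 0 := by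
          simp only [map_add, MonoidAlgebra.lift_single, MonoidHom.id_apply, one_smul,
            neg_smul]
          rw [hxdef, add_neg_cancel]
        have hmr : MonoidAlgebra.ofCoeff (Finsupp.mapRange ν hν0
            (MonoidAlgebra.single x (1 : R) + MonoidAlgebra.single a (-r)).coeff)
            = MonoidAlgebra.single x (1 : S) + MonoidAlgebra.single a (ν r) := by
          rw [MonoidAlgebra.coeff_add, MonoidAlgebra.coeff_single, MonoidAlgebra.coeff_single,
            aux_disj ν hν0 _ _ (aux_disj_single hx 1 (-r)), Finsupp.mapRange_single,
            Finsupp.mapRange_single, hν1, hνneg]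
          simp only [MonoidAlgebra.ofCoeff_add, MonoidAlgebra.ofCoeff_single]
        have E1 := hrel _ hf a
        have E2 := hrel _ hf x
        rw [hmr] at E1 E2
        rw [show ((MonoidAlgebra.single x (1:S) + MonoidAlgebra.single a (ν r)) :
            MonoidAlgebra S A).erase a
            = MonoidAlgebra.single x (1:S) from by
          rw [aux_erase, MonoidAlgebra.coeff_add, MonoidAlgebra.coeff_single,
            MonoidAlgebra.coeff_single, Finsupp.erase_add, Finsupp.erase_single,
            Finsupp.erase_single_ne (fun hh' => hx hh'.symm), add_zero,
            MonoidAlgebra.ofCoeff_single]] at E1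
        rw [show ((MonoidAlgebra.single x (1:S) + MonoidAlgebra.single a (ν r)) :
            MonoidAlgebra S A).erase x
            = MonoidAlgebra.single a (ν r) from by
          rw [aux_erase, MonoidAlgebra.coeff_add, MonoidAlgebra.coeff_single,
            MonoidAlgebra.coeff_single, Finsupp.erase_add, Finsupp.erase_single,
            Finsupp.erase_single_ne (fun hh' => hx hh'), zero_add,
            MonoidAlgebra.ofCoeff_single]] at E2
        simp only [map_add, hψ, map_one, one_mul] at E1 E2
        exact (E1.symm.trans E2)
    -- bend additivity
    have hαadd : ∀ a b : A, α a + α b + α (a + b) = α a + α b := by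
      intro a b
      by_cases ha0 : a = 0
      · subst ha0
        simp only [hα0, zero_add]
        exact tplusα b
      by_cases hb0 : b = 0
      · subst hb0
        simp only [hα0, add_zero]
        exact tplusα a
      by_cases hab : a = b
      · -- a = b ≠ 0
        subst hab
        have hne : a + a ≠ a := fun hcon => ha0 (by
          have := add_right_cancel (a := a) (b := a) (c := 0) (by rw [hcon, zero_add])
          exact this)
        have hf : MonoidAlgebra.lift R A A (MonoidHom.id A)
            (MonoidAlgebra.single (a + a) (1 : R) + MonoidAlgebra.single a (-(2:R))) = 0 := by
          simp only [map_add, MonoidAlgebra.lift_single, MonoidHom.id_apply, one_smul,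
            neg_smul]
          rw [two_smul R a, add_neg_cancel]
        have hmr : MonoidAlgebra.ofCoeff (Finsupp.mapRange ν hν0
            (MonoidAlgebra.single (a+a) (1 : R) + MonoidAlgebra.single a (-(2:R))).coeff)
            = MonoidAlgebra.single (a+a) (1 : S) + MonoidAlgebra.single a (ν 2) := by
          rw [MonoidAlgebra.coeff_add, MonoidAlgebra.coeff_single, MonoidAlgebra.coeff_single,
            aux_disj ν hν0 _ _ (aux_disj_single hne 1 (-(2:R))), Finsupp.mapRange_single,
            Finsupp.mapRange_single, hν1, hνneg]
          simp only [MonoidAlgebra.ofCoeff_add, MonoidAlgebra.ofCoeff_single]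
        have E := hrel _ hf (a + a)
        rw [hmr] at E
        rw [show ((MonoidAlgebra.single (a+a) (1:S) + MonoidAlgebra.single a (ν 2)) :
            MonoidAlgebra S A).erase (a+a)
            = MonoidAlgebra.single a (ν 2) from by
          rw [aux_erase, MonoidAlgebra.coeff_add, MonoidAlgebra.coeff_single,
            MonoidAlgebra.coeff_single, Finsupp.erase_add, Finsupp.erase_single,
            Finsupp.erase_single_ne (fun hh' => hne hh'), zero_add,
            MonoidAlgebra.ofCoeff_single]] at E
        simp only [map_add, hψ, map_one, one_mul] at E
        -- E : α (a+a) + ι (ν 2) * α a = ι (ν 2) * α a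
        have hν2 : ν 2 + 1 + 1 = 1 := by
          have := hνadd 1 1
          rw [hν1, one_add_one_eq_two, hS 1] at this
          exact this
        have E' : ι (ν 2) * α a + α a = α a := by
          have h1 : (ι (ν 2) + 1 + 1) * α a = 1 * α a := by
            rw [← map_one ι, ← map_add, ← map_add, hν2]
          rw [add_mul, add_mul, one_mul] at h1
          rw [add_assoc, tplusα] at h1
          exact h1
        have key : α (a + a) + α a = α a := by
          calc α (a+a) + α a = α (a+a) + (ι (ν 2) * α a + α a) := by rw [E']
            _ = (α (a+a) + ι (ν 2) * α a) + α a := by ring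
            _ = ι (ν 2) * α a + α a := by rw [E]
            _ = α a := E'
        calc α a + α a + α (a + a) = α a + (α a + α (a+a)) := by ring
          _ = α a + (α (a+a) + α a) := by ring
          _ = α a + α a := by rw [key]
      · -- a ≠ b, both nonzero: all three distinct
        have h1 : a + b ≠ a := fun hcon => hb0 (by
          have : a + b = a + 0 := by rw [hcon, add_zero]
          exact add_left_cancel this)
        have h2 : a + b ≠ b := fun hcon => ha0 (by
          have : a + b = 0 + b := by rw [hcon, zero_add]
          exact add_right_cancel this)
        have hf : MonoidAlgebra.lift R A A (MonoidHom.id A)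
            ((MonoidAlgebra.single (a + b) (-1 : R) + MonoidAlgebra.single a (1:R))
              + MonoidAlgebra.single b (1:R)) = 0 := by
          simp only [map_add, MonoidAlgebra.lift_single, MonoidHom.id_apply, one_smul,
            neg_smul]
          ring
        have hd1 : ∀ i, (Finsupp.single (a+b) (-1:R)) i = 0 ∨
            (Finsupp.single a (1:R)) i = 0 := aux_disj_single h1 _ _
        have hd2 : ∀ i, ((Finsupp.single (a+b) (-1:R) + Finsupp.single a (1:R)) :
            A →₀ R) i = 0 ∨ (Finsupp.single b (1:R)) i = 0 := by
          intro i
          by_cases hbi : b = i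
          · subst hbi
            left
            rw [Finsupp.add_apply, Finsupp.single_eq_of_ne' h2,
              Finsupp.single_eq_of_ne' hab, add_zero]
          · right; exact Finsupp.single_eq_of_ne' hbi
        have hmr : MonoidAlgebra.ofCoeff (Finsupp.mapRange ν hν0
            ((MonoidAlgebra.single (a+b) (-1:R) + MonoidAlgebra.single a (1:R))
              + MonoidAlgebra.single b (1:R)).coeff)
            = (MonoidAlgebra.single (a+b) (1:S) + MonoidAlgebra.single a (1:S))
              + MonoidAlgebra.single b (1:S) := by
          rw [MonoidAlgebra.coeff_add, MonoidAlgebra.coeff_add, MonoidAlgebra.coeff_single,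
            MonoidAlgebra.coeff_single, MonoidAlgebra.coeff_single,
            aux_disj ν hν0 _ _ hd2, aux_disj ν hν0 _ _ hd1, Finsupp.mapRange_single,
            Finsupp.mapRange_single, Finsupp.mapRange_single, hνneg, hν1]
          simp only [MonoidAlgebra.ofCoeff_add, MonoidAlgebra.ofCoeff_single]
        have E := hrel _ hf (a + b)
        rw [hmr] at E
        rw [show (((MonoidAlgebra.single (a+b) (1:S) + MonoidAlgebra.single a (1:S))
            + MonoidAlgebra.single b (1:S)) : MonoidAlgebra S A).erase (a+b)
            = MonoidAlgebra.single a (1:S) + MonoidAlgebra.single b (1:S) from by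
          rw [aux_erase, MonoidAlgebra.coeff_add, MonoidAlgebra.coeff_add,
            MonoidAlgebra.coeff_single, MonoidAlgebra.coeff_single, MonoidAlgebra.coeff_single,
            Finsupp.erase_add, Finsupp.erase_add, Finsupp.erase_single,
            Finsupp.erase_single_ne (fun hh' => h1 hh'),
            Finsupp.erase_single_ne (fun hh' => h2 hh'), zero_add]
          simp only [MonoidAlgebra.ofCoeff_add, MonoidAlgebra.ofCoeff_single]] at E
        simp only [map_add, hψ, map_one, one_mul] at E
        -- E : α (a+b) + α a + α b = α a + α b
        calc α a + α b + α (a + b) = α (a+b) + α a + α b := by ring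
          _ = α a + α b := E
    exact ⟨hα0, hα1, hαmul, hαsmul, hαadd⟩
  ------------------------------------------------------------------
  -- BACKWARD: construct a hom from a valuation
  ------------------------------------------------------------------
  have backward : ∀ (α : A → T), α 0 = 0 → α 1 = 1 → (∀ a b : A, α (a * b) = α a * α b) →
      (∀ (r : R) (a : A), α (r • a) = ι (ν r) * α a) →
      (∀ a b : A, α a + α b + α (a + b) = α a + α b) →
      ∃ h : C.Quotient →+* T,
        (∀ s : S, h (C.mk' (MonoidAlgebra.single (1 : A) s)) = ι s) ∧
        ∀ a : A, h (C.mk' (MonoidAlgebra.single a 1)) = α a := by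
    intro α hα0 hα1 hαmul hαsmul hαadd
    have hαneg : ∀ a : A, α (-a) = α a := by
      intro a
      have := hαsmul (-1) a
      rw [neg_one_smul, hνneg, hν1, map_one, one_mul] at this
      exact this
    set αM : A →* T := { toFun := α, map_one' := hα1, map_mul' := hαmul } with hαM
    set φ₀ : MonoidAlgebra S A →+* T :=
      MonoidAlgebra.liftNCRingHom ι αM (fun x y => Commute.all _ _) with hφ₀def
    have hφ₀ : ∀ (a : A) (s : S), φ₀ (MonoidAlgebra.single a s) = ι s * α a := by
      intro a s
      simp [hφ₀def, MonoidAlgebra.liftNCRingHom, MonoidAlgebra.liftNC_single, hαM]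
    -- base relation preserved
    have hbase : ∀ p q : MonoidAlgebra S A,
        (∃ f : MonoidAlgebra R A, MonoidAlgebra.lift R A A (MonoidHom.id A) f = 0 ∧
          ∃ m : A, p = MonoidAlgebra.ofCoeff (Finsupp.mapRange ν hν0 f.coeff) ∧
            q = (MonoidAlgebra.ofCoeff (Finsupp.mapRange ν hν0 f.coeff)).erase m) →
        φ₀ p = φ₀ q := by
      rintro p q ⟨f, hf, m, rfl, rfl⟩
      have hsumform : ∀ g : MonoidAlgebra R A,
          φ₀ (MonoidAlgebra.ofCoeff (Finsupp.mapRange ν hν0 g.coeff)) =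
            ∑ i ∈ g.coeff.support, α (g.coeff i • i) := by
        intro g
        rw [aux_sum ι φ₀ α hφ₀, MonoidAlgebra.coeff_ofCoeff]
        rw [Finsupp.sum_mapRange_index (fun a => by simp [hν0])]
        rw [Finsupp.sum]
        exact Finset.sum_congr rfl fun i _ => (hαsmul (g.coeff i) i).symm
      rw [hre f m, hsumform, hsumform]
      have hsupp : (f.erase m).coeff.support = f.coeff.support.erase m := by
        rw [MonoidAlgebra.coeff_erase]; exact Finsupp.support_erase
      rw [hsupp]
      have hagree : ∑ i ∈ f.coeff.support.erase m, α ((f.erase m).coeff i • i)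
          = ∑ i ∈ f.coeff.support.erase m, α (f.coeff i • i) := by
        refine Finset.sum_congr rfl fun i hi => ?_
        rw [MonoidAlgebra.coeff_erase, Finsupp.erase_ne (Finset.ne_of_mem_erase hi)]
      rw [hagree]
      refine aux_key α hα0 hαadd hαneg f.coeff.support (fun i => f.coeff i • i) ?_ m
      rw [← hev f, hf]
    have hker : ∀ p q : MonoidAlgebra S A, C p q → φ₀ p = φ₀ q := by
      intro p q hpq
      rw [hC] at hpq
      induction hpq with
      | of p q h' => exact hbase _ _ h'
      | refl _ => rfl
      | symm _ ih => exact ih.symm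
      | trans _ _ ih1 ih2 => exact ih1.trans ih2
      | add _ _ ih1 ih2 => rw [map_add, map_add, ih1, ih2]
      | mul _ _ ih1 ih2 => rw [map_mul, map_mul, ih1, ih2]
    -- the induced hom on the quotient
    refine ⟨{ toFun := fun x => Quotient.liftOn' x φ₀ (fun p q hpq => hker p q hpq),
              map_one' := map_one φ₀,
              map_mul' := fun x y => Quotient.inductionOn₂' x y fun p q => map_mul φ₀ p q,
              map_zero' := map_zero φ₀,
              map_add' := fun x y => Quotient.inductionOn₂' x y fun p q => map_add φ₀ p q },
            ?_, ?_⟩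
    · intro s
      show φ₀ (MonoidAlgebra.single (1 : A) s) = ι s
      rw [hφ₀, hα1, mul_one]
    · intro a
      show φ₀ (MonoidAlgebra.single a 1) = α a
      rw [hφ₀, map_one, one_mul]
  ------------------------------------------------------------------
  -- uniqueness
  ------------------------------------------------------------------
  have uniq : ∀ (h₁ h₂ : C.Quotient →+* T),
      (∀ s : S, h₁ (C.mk' (MonoidAlgebra.single (1 : A) s)) = ι s) →
      (∀ s : S, h₂ (C.mk' (MonoidAlgebra.single (1 : A) s)) = ι s) →
      (∀ a : A, h₁ (C.mk' (MonoidAlgebra.single a 1)) = h₂ (C.mk' (MonoidAlgebra.single a 1))) →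
      h₁ = h₂ := by
    intro h₁ h₂ hh₁ hh₂ hval
    have hcomp : h₁.comp C.mk' = h₂.comp C.mk' := by
      refine MonoidAlgebra.ringHom_ext (fun s => ?_) (fun a => ?_)
      · show h₁ (C.mk' _) = h₂ (C.mk' _)
        rw [hh₁ s, hh₂ s]
      · exact hval a
    refine RingHom.ext fun x => ?_
    induction x using Quotient.inductionOn' with
    | h p => exact RingHom.congr_fun hcomp p
  ------------------------------------------------------------------
  -- assemble the equivalence
  ------------------------------------------------------------------
  have Gfun : ∀ (p : {α : A → T // α 0 = 0 ∧ α 1 = 1 ∧ (∀ a b : A, α (a * b) = α a * α b) ∧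
      (∀ (r : R) (a : A), α (r • a) = ι (ν r) * α a) ∧
      ∀ a b : A, α a + α b + α (a + b) = α a + α b}),
      ∃ h : {h : C.Quotient →+* T //
        ∀ s : S, h (C.mk' (MonoidAlgebra.single (1 : A) s)) = ι s},
      ∀ a : A, (h : C.Quotient →+* T) (C.mk' (MonoidAlgebra.single a 1)) = (p : A → T) a := by
    rintro ⟨α, hα0, hα1, hαmul, hαsmul, hαadd⟩
    obtain ⟨h, hh1, hh2⟩ := backward α hα0 hα1 hαmul hαsmul hαadd
    exact ⟨⟨h, hh1⟩, hh2⟩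
  choose G hG using Gfun
  refine ⟨{ toFun := fun h => ⟨fun a => (h : C.Quotient →+* T) (C.mk' (MonoidAlgebra.single a 1)),
              forward h h.2⟩,
            invFun := G,
            left_inv := ?_,
            right_inv := ?_ }, fun h => rfl⟩
  · intro h
    refine Subtype.ext ?_
    refine uniq _ _ (G _).2 h.2 ?_
    intro a
    exact hG _ a
  · intro p
    refine Subtype.ext ?_
    funext a
    exact hG p a
end

section
/- Let R be a commutative ring, S an idempotent semiring, ν : R → S a generalized valuation, and A a commutative R-algebra that is an integral domain. Let G ⊆ MonoidAlgebra R A be the set consisting of the elements single a r − single (r • a) 1 for all r ∈ R and a ∈ A, together with the elements single a 1 + single b 1 + single c 1 for all a, b, c ∈ A with a + b + c = 0. Then the congruence (RingCon) on MonoidAlgebra S A generated by the pairs (ν_* f, (ν_* f).erase m) for f ∈ ker ev and m ∈ A equals the congruence generated by the pairs (ν_* g, (ν_* g).erase m) for g ∈ G and m ∈ A. In other words, G is a strong tropical basis of ker ev for every valuation ν. -/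
open Finsupp
open Finsupp

theorem trop_erase_pair {S A : Type*} [CommSemiring S] [DecidableEq A] {a b : A} (h : a ≠ b)
    (r s : S) :
    (Finsupp.single a r + Finsupp.single b s).erase a = Finsupp.single b s := by
  rw [Finsupp.erase_add, Finsupp.erase_single, Finsupp.erase_single_ne h, zero_add]

theorem trop_erase_pair' {S A : Type*} [CommSemiring S] [DecidableEq A] {a b : A} (h : a ≠ b)
    (r s : S) :
    (Finsupp.single a r + Finsupp.single b s).erase b = Finsupp.single a r := by
  rw [Finsupp.erase_add, Finsupp.erase_single, Finsupp.erase_single_ne h.symm, add_zero]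

theorem trop_mapRange_sub {R S A : Type*} [CommRing R] [CommSemiring S] [DecidableEq A]
    (ν : R → S) (hν0 : ν 0 = 0) (hν1 : ν 1 = 1) (hνneg : ∀ a : R, ν (-a) = ν a)
    {a b : A} (h : a ≠ b) (r : R) :
    Finsupp.mapRange ν hν0 (Finsupp.single a r - Finsupp.single b (1:R))
      = Finsupp.single a (ν r) + Finsupp.single b (1:S) := by
  ext x
  simp only [Finsupp.mapRange_apply, Finsupp.sub_apply, Finsupp.add_apply]
  rcases eq_or_ne a x with rfl | hax
  · rw [Finsupp.single_eq_same, Finsupp.single_eq_same,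
      Finsupp.single_eq_of_ne' h.symm, Finsupp.single_eq_of_ne' h.symm, sub_zero, add_zero]
  · rw [Finsupp.single_eq_of_ne' hax, Finsupp.single_eq_of_ne' hax, zero_add]
    rcases eq_or_ne b x with rfl | hbx
    · rw [Finsupp.single_eq_same, Finsupp.single_eq_same, zero_sub, hνneg, hν1]
    · rw [Finsupp.single_eq_of_ne' hbx, Finsupp.single_eq_of_ne' hbx, sub_zero, hν0]

theorem trop_mapRange_pair {R S A : Type*} [CommRing R] [CommSemiring S] [DecidableEq A]
    (ν : R → S) (hν0 : ν 0 = 0) {a b : A} (h : a ≠ b) (r s : R) :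
    Finsupp.mapRange ν hν0 (Finsupp.single a r + Finsupp.single b s)
      = Finsupp.single a (ν r) + Finsupp.single b (ν s) := by
  ext x
  simp only [Finsupp.mapRange_apply, Finsupp.add_apply]
  rcases eq_or_ne a x with rfl | hax
  · rw [Finsupp.single_eq_same, Finsupp.single_eq_same,
      Finsupp.single_eq_of_ne' h.symm, Finsupp.single_eq_of_ne' h.symm, add_zero, add_zero]
  · rw [Finsupp.single_eq_of_ne' hax, Finsupp.single_eq_of_ne' hax, zero_add, zero_add]
    rcases eq_or_ne b x with rfl | hbx
    · rw [Finsupp.single_eq_same, Finsupp.single_eq_same]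
    · rw [Finsupp.single_eq_of_ne' hbx, Finsupp.single_eq_of_ne' hbx, hν0]

theorem trop_mapRange_triple {R S A : Type*} [CommRing R] [CommSemiring S] [DecidableEq A]
    (ν : R → S) (hν0 : ν 0 = 0) {a b c : A} (hab : a ≠ b) (hac : a ≠ c) (hbc : b ≠ c)
    (r s t : R) :
    Finsupp.mapRange ν hν0
        (Finsupp.single a r + Finsupp.single b s + Finsupp.single c t)
      = Finsupp.single a (ν r) + Finsupp.single b (ν s) + Finsupp.single c (ν t) := by
  ext x
  simp only [Finsupp.mapRange_apply, Finsupp.add_apply]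
  rcases eq_or_ne a x with rfl | hax
  · rw [Finsupp.single_eq_same, Finsupp.single_eq_same, Finsupp.single_eq_of_ne' hab.symm,
      Finsupp.single_eq_of_ne' hab.symm, Finsupp.single_eq_of_ne' hac.symm,
      Finsupp.single_eq_of_ne' hac.symm, add_zero, add_zero, add_zero, add_zero]
  · rw [Finsupp.single_eq_of_ne' hax, Finsupp.single_eq_of_ne' hax, zero_add, zero_add]
    rcases eq_or_ne b x with rfl | hbx
    · rw [Finsupp.single_eq_same, Finsupp.single_eq_same, Finsupp.single_eq_of_ne' hbc.symm,
        Finsupp.single_eq_of_ne' hbc.symm, add_zero, add_zero]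
    · rw [Finsupp.single_eq_of_ne' hbx, Finsupp.single_eq_of_ne' hbx, zero_add, zero_add]
      rcases eq_or_ne c x with rfl | hcx
      · rw [Finsupp.single_eq_same, Finsupp.single_eq_same]
      · rw [Finsupp.single_eq_of_ne' hcx, Finsupp.single_eq_of_ne' hcx, hν0]

theorem trop_mapRange_sum {R S A : Type*} [CommRing R] [CommSemiring S] [DecidableEq A]
    (ν : R → S) (hν0 : ν 0 = 0) (f : A →₀ R) :
    Finsupp.mapRange ν hν0 f = ∑ a ∈ f.support, Finsupp.single a (ν (f a)) := by
  ext x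
  rw [Finsupp.finset_sum_apply, Finsupp.mapRange_apply]
  rw [Finset.sum_eq_single x (fun a _ ha => Finsupp.single_eq_of_ne' ha)
    (fun hx => by rw [Finsupp.notMem_support_iff.mp hx, hν0, Finsupp.single_eq_same])]
  rw [Finsupp.single_eq_same]

theorem trop_erase_sum {S A : Type*} [CommSemiring S] [DecidableEq A]
    (T : Finset A) (c : A → S) (m : A) :
    (∑ a ∈ T, Finsupp.single a (c a)).erase m
      = ∑ a ∈ T.erase m, Finsupp.single a (c a) := by
  ext x
  rcases eq_or_ne x m with rfl | hxm
  · rw [Finsupp.erase_same, Finsupp.finset_sum_apply]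
    refine (Finset.sum_eq_zero (fun a ha => ?_)).symm
    exact Finsupp.single_eq_of_ne' (Finset.mem_erase.mp ha).1
  · rw [Finsupp.erase_ne hxm, Finsupp.finset_sum_apply, Finsupp.finset_sum_apply]
    refine (Finset.sum_subset (Finset.erase_subset m T) (fun a haT hane => ?_)).symm
    have ham : a = m := by
      by_contra h
      exact hane (Finset.mem_erase.mpr ⟨h, haT⟩)
    exact Finsupp.single_eq_of_ne' (ham ▸ hxm.symm)

theorem trop_erase_triple_c {S A : Type*} [CommSemiring S] [DecidableEq A] {a b c : A}
    (hac : a ≠ c) (hbc : b ≠ c) (r s t : S) :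
    (Finsupp.single a r + Finsupp.single b s + Finsupp.single c t).erase c
      = Finsupp.single a r + Finsupp.single b s := by
  rw [Finsupp.erase_add, Finsupp.erase_add, Finsupp.erase_single,
    Finsupp.erase_single_ne hac.symm, Finsupp.erase_single_ne hbc.symm, add_zero]

theorem trop_erase_triple_b {S A : Type*} [CommSemiring S] [DecidableEq A] {a b c : A}
    (hab : a ≠ b) (hbc : b ≠ c) (r s t : S) :
    (Finsupp.single a r + Finsupp.single b s + Finsupp.single c t).erase b
      = Finsupp.single a r + Finsupp.single c t := by
  rw [Finsupp.erase_add, Finsupp.erase_add, Finsupp.erase_single,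
    Finsupp.erase_single_ne hab.symm, Finsupp.erase_single_ne hbc, add_zero]

theorem trop_ker_ev_bend {R S A : Type*} [CommRing R] [CommSemiring S] [CommRing A] [Algebra R A]
    (hS : ∀ s : S, s + s = s)
    (ν : R → S) (hν0 : ν 0 = 0) (hν1 : ν 1 = 1)
    (hνneg : ∀ a : R, ν (-a) = ν a)
    (hνadd : ∀ a b : R, ν (a + b) + ν a + ν b = ν a + ν b)
    (D : AddCon (A →₀ S))
    (hD1 : ∀ (r : R) (a : A) (m : A),
      D (Finsupp.mapRange ν hν0 (Finsupp.single a r - Finsupp.single (r • a) 1))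
        ((Finsupp.mapRange ν hν0 (Finsupp.single a r - Finsupp.single (r • a) 1)).erase m))
    (hD2 : ∀ (a b c : A), a + b + c = 0 → ∀ m : A,
      D (Finsupp.mapRange ν hν0
            (Finsupp.single a (1:R) + Finsupp.single b 1 + Finsupp.single c 1))
        ((Finsupp.mapRange ν hν0
            (Finsupp.single a (1:R) + Finsupp.single b 1 + Finsupp.single c 1)).erase m))
    (f : A →₀ R)
    (hf : MonoidAlgebra.lift R A A (MonoidHom.id A) (MonoidAlgebra.ofCoeff f) = 0) (m : A) :
    D (Finsupp.mapRange ν hν0 f) ((Finsupp.mapRange ν hν0 f).erase m) := by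
  classical
  have hν2 : ν 2 + (1:S) = 1 := by
    have h := hνadd 1 1
    rw [hν1, add_assoc, hS 1, one_add_one_eq_two] at h
    exact h
  -- x₀ ~ 0
  have LZ : D (Finsupp.single (0:A) (1:S)) 0 := by
    have h := hD1 0 0 0
    have e : (Finsupp.single (0:A) (0:R) - Finsupp.single ((0:R) • (0:A)) 1)
        = Finsupp.single (0:A) (-1:R) := by
      rw [Finsupp.single_zero, zero_smul, zero_sub, Finsupp.single_neg]
    rw [e, Finsupp.mapRange_single, hνneg, hν1, Finsupp.erase_single] at h
    exact h
  -- single a (ν r) ~ single (r • a) 1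
  have LA : ∀ (r : R) (a : A), D (Finsupp.single a (ν r)) (Finsupp.single (r • a) (1:S)) := by
    intro r a
    rcases eq_or_ne a (r • a) with heq | hne
    · rw [← heq]
      have h := hD1 r a a
      rw [← heq, ← Finsupp.single_sub, Finsupp.mapRange_single, Finsupp.erase_single] at h
      -- h : D (single a (ν (r - 1))) 0
      have key : ν r + ν (r - 1) = 1 + ν (r - 1) := by
        have I2 := hνadd 1 (r - 1)
        rw [hν1, show (1:R) + (r - 1) = r by ring] at I2
        have I1 := hνadd r (1 - r)
        rw [show (r:R) + (1 - r) = 1 by ring, hν1,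
          show (1:R) - r = -(r - 1) by ring, hνneg] at I1
        calc ν r + ν (r - 1) = 1 + ν r + ν (r - 1) := by rw [I1]
          _ = ν r + 1 + ν (r - 1) := by ring
          _ = 1 + ν (r - 1) := I2
      have h1 : D (Finsupp.single a (ν r))
          (Finsupp.single a (ν r) + Finsupp.single a (ν (r - 1))) := by
        have := D.add (D.refl (Finsupp.single a (ν r))) (D.symm h)
        rwa [add_zero] at this
      rw [← Finsupp.single_add, key, Finsupp.single_add] at h1
      have h2 : D (Finsupp.single a (1:S) + Finsupp.single a (ν (r - 1)))
          (Finsupp.single a (1:S)) := by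
        have := D.add (D.refl (Finsupp.single a (1:S))) h
        rwa [add_zero] at this
      exact D.trans h1 h2
    · have h1 := hD1 r a (r • a)
      have h2 := hD1 r a a
      rw [trop_mapRange_sub ν hν0 hν1 hνneg hne, trop_erase_pair' hne] at h1
      rw [trop_mapRange_sub ν hν0 hν1 hνneg hne, trop_erase_pair hne] at h2
      exact D.trans (D.symm h1) h2
  -- single a 1 ~ single (-a) 1
  have LM : ∀ a : A, D (Finsupp.single a (1:S)) (Finsupp.single (-a) (1:S)) := by
    intro a
    have h := LA (-1) a
    rwa [hνneg, hν1, neg_one_smul] at h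
  -- swap lemma
  have LT : ∀ a b c : A, a + b + c = 0 →
      D (Finsupp.single a (1:S) + Finsupp.single b 1)
        (Finsupp.single a 1 + Finsupp.single c 1) := by
    intro a b c habc
    rcases eq_or_ne b c with rfl | hbc
    · exact D.refl _
    rcases eq_or_ne a b with rfl | hab
    · have hac : a ≠ c := hbc
      have h := hD2 a a c habc c
      have e : (Finsupp.single a (1:R) + Finsupp.single a 1 + Finsupp.single c 1)
          = Finsupp.single a (2:R) + Finsupp.single c 1 := by
        rw [← Finsupp.single_add, one_add_one_eq_two]
      rw [e, trop_mapRange_pair ν hν0 hac, hν1, trop_erase_pair' hac] at h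
      have h' := D.add (D.refl (Finsupp.single a (1:S))) h
      rw [← add_assoc, ← Finsupp.single_add,
        show (1:S) + ν 2 = 1 by rw [add_comm]; exact hν2] at h'
      rw [← Finsupp.single_add, hS 1]
      exact D.symm h'
    rcases eq_or_ne a c with rfl | hac
    · have h := hD2 a b a habc b
      have e : (Finsupp.single a (1:R) + Finsupp.single b 1 + Finsupp.single a 1)
          = Finsupp.single a (2:R) + Finsupp.single b 1 := by
        rw [add_right_comm, ← Finsupp.single_add, one_add_one_eq_two]
      rw [e, trop_mapRange_pair ν hν0 hab, hν1, trop_erase_pair' hab] at h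
      have h' := D.add (D.refl (Finsupp.single a (1:S))) h
      rw [← add_assoc, ← Finsupp.single_add,
        show (1:S) + ν 2 = 1 by rw [add_comm]; exact hν2] at h'
      rw [← Finsupp.single_add, hS 1]
      exact h'
    · have h1 := hD2 a b c habc c
      have h2 := hD2 a b c habc b
      rw [trop_mapRange_triple ν hν0 hab hac hbc, hν1, trop_erase_triple_c hac hbc] at h1
      rw [trop_mapRange_triple ν hν0 hab hac hbc, hν1, trop_erase_triple_b hab hbc] at h2
      exact D.trans (D.symm h1) h2
  -- removing the balancing term
  have LF : ∀ (T : Finset A) (w : A → A),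
      D ((∑ i ∈ T, Finsupp.single (w i) (1:S)) + Finsupp.single (-(∑ i ∈ T, w i)) 1)
        (∑ i ∈ T, Finsupp.single (w i) (1:S)) := by
    intro T
    induction T using Finset.induction_on with
    | empty =>
      intro w
      rw [Finset.sum_empty, Finset.sum_empty, neg_zero, zero_add]
      exact LZ
    | @insert i T hi IH =>
      intro w
      simp only [Finset.sum_insert hi]
      have step1 : D (Finsupp.single (w i) (1:S)
            + Finsupp.single (-(w i + ∑ j ∈ T, w j)) 1)
          (Finsupp.single (w i) 1 + Finsupp.single (∑ j ∈ T, w j) 1) :=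
        LT (w i) (-(w i + ∑ j ∈ T, w j)) (∑ j ∈ T, w j) (by ring)
      have step2 : D (Finsupp.single (w i) (1:S) + Finsupp.single (∑ j ∈ T, w j) 1)
          (Finsupp.single (w i) 1 + Finsupp.single (-(∑ j ∈ T, w j)) 1) :=
        D.add (D.refl _) (LM _)
      have t := D.add (D.refl (∑ j ∈ T, Finsupp.single (w j) (1:S)))
        (D.trans step1 step2)
      have step3 := D.add (D.refl (Finsupp.single (w i) (1:S))) (IH w)
      have e1 : (Finsupp.single (w i) (1:S) + ∑ j ∈ T, Finsupp.single (w j) (1:S))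
            + Finsupp.single (-(w i + ∑ j ∈ T, w j)) 1
          = (∑ j ∈ T, Finsupp.single (w j) (1:S))
            + (Finsupp.single (w i) 1 + Finsupp.single (-(w i + ∑ j ∈ T, w j)) 1) := by
        abel
      have e2 : Finsupp.single (w i) (1:S)
            + ((∑ j ∈ T, Finsupp.single (w j) (1:S)) + Finsupp.single (-(∑ j ∈ T, w j)) 1)
          = (∑ j ∈ T, Finsupp.single (w j) (1:S))
            + (Finsupp.single (w i) 1 + Finsupp.single (-(∑ j ∈ T, w j)) 1) := by
        abel
      rw [e1]
      rw [← e2] at t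
      exact D.trans t step3
  by_cases hm : m ∈ (Finsupp.mapRange ν hν0 f).support
  · have hm' : m ∈ f.support := Finsupp.support_mapRange hm
    set w : A → A := fun a => f a • a with hw
    have hsum : ∑ a ∈ f.support, w a = 0 := by
      rw [MonoidAlgebra.lift_apply] at hf
      simpa [Finsupp.sum, hw] using hf
    have Dsum : ∀ (T : Finset A) (p q : A → A →₀ S), (∀ i ∈ T, D (p i) (q i)) →
        D (∑ i ∈ T, p i) (∑ i ∈ T, q i) := by
      intro T
      induction T using Finset.induction_on with
      | empty => intro p q _; simp only [Finset.sum_empty]; exact D.refl 0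
      | @insert i T hi IH =>
        intro p q hpq
        simp only [Finset.sum_insert hi]
        exact D.add (hpq i (Finset.mem_insert_self i T))
          (IH p q fun j hj => hpq j (Finset.mem_insert_of_mem hj))
    have hA1 : D (Finsupp.mapRange ν hν0 f)
        (∑ a ∈ f.support, Finsupp.single (w a) (1:S)) := by
      rw [trop_mapRange_sum ν hν0 f]
      exact Dsum _ _ _ (fun a _ => LA (f a) a)
    have hA2 : D ((Finsupp.mapRange ν hν0 f).erase m)
        (∑ a ∈ f.support.erase m, Finsupp.single (w a) (1:S)) := by
      rw [trop_mapRange_sum ν hν0 f, trop_erase_sum]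
      exact Dsum _ _ _ (fun a _ => LA (f a) a)
    have hwm : w m = -(∑ a ∈ f.support.erase m, w a) := by
      have h := Finset.add_sum_erase f.support w hm'
      rw [hsum] at h
      exact eq_neg_of_add_eq_zero_left h
    have hmain : D (∑ a ∈ f.support, Finsupp.single (w a) (1:S))
        (∑ a ∈ f.support.erase m, Finsupp.single (w a) (1:S)) := by
      rw [← Finset.add_sum_erase f.support (fun a => Finsupp.single (w a) (1:S)) hm',
        hwm, add_comm]
      exact LF _ w
    exact D.trans (D.trans hA1 hmain) (D.symm hA2)
  · rw [Finsupp.erase_of_notMem_support hm]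
    exact D.refl _

/-- **Strong tropical basis for the kernel of the evaluation map.**
Let `ν : R → S` be a generalized valuation into an idempotent semiring and `A` an integral
`R`-algebra.  The congruence on `MonoidAlgebra S A` generated by the bend relations of the
coefficientwise valuations of all elements of the kernel of `ev : MonoidAlgebra R A → A` equals
the congruence generated by the bend relations of the coefficientwise valuations of the elements
`r·xₐ − x_{r•a}` (for `r ∈ R`, `a ∈ A`) and `xₐ + x_b + x_c` (for `a + b + c = 0`); i.e. these
elements form a strong tropical basis of `ker ev` for every valuation `ν`. -/
theorem strong_tropical_basis_of_ker_ev
    {R S A : Type*} [CommRing R] [CommSemiring S] [CommRing A] [IsDomain A] [Algebra R A]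
    (hS : ∀ s : S, s + s = s)
    (ν : R → S) (hν0 : ν 0 = 0) (hν1 : ν 1 = 1)
    (hνmul : ∀ a b : R, ν (a * b) = ν a * ν b)
    (hνneg : ∀ a : R, ν (-a) = ν a)
    (hνadd : ∀ a b : R, ν (a + b) + ν a + ν b = ν a + ν b)
    (G : Set (MonoidAlgebra R A))
    (hG : G = {g | (∃ (r : R) (a : A),
          g = MonoidAlgebra.single a r - MonoidAlgebra.single (r • a) 1) ∨
        ∃ a b c : A, a + b + c = 0 ∧
          g = MonoidAlgebra.single a 1 + MonoidAlgebra.single b 1 + MonoidAlgebra.single c 1}) :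
    ringConGen (fun (p q : MonoidAlgebra S A) =>
        ∃ f : MonoidAlgebra R A, MonoidAlgebra.lift R A A (MonoidHom.id A) f = 0 ∧
          ∃ m : A, p = MonoidAlgebra.ofCoeff (Finsupp.mapRange ν hν0 f.coeff) ∧
            q = MonoidAlgebra.ofCoeff ((Finsupp.mapRange ν hν0 f.coeff).erase m)) =
      ringConGen (fun (p q : MonoidAlgebra S A) =>
        ∃ g ∈ G, ∃ m : A,
          p = MonoidAlgebra.ofCoeff (Finsupp.mapRange ν hν0 g.coeff) ∧
            q = MonoidAlgebra.ofCoeff ((Finsupp.mapRange ν hν0 g.coeff).erase m)) := by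
  apply le_antisymm
  · refine RingCon.ringConGen_le.mpr ?_
    rintro p q ⟨f, hf, m, rfl, rfl⟩
    refine trop_ker_ev_bend hS ν hν0 hν1 hνneg hνadd
      (AddCon.comap MonoidAlgebra.ofCoeff (fun _ _ => rfl) (ringConGen _).toAddCon) ?_ ?_
      f.coeff hf m
    · intro r a m'
      exact RingConGen.Rel.of _ _
        ⟨MonoidAlgebra.single a r - MonoidAlgebra.single (r • a) 1,
          by rw [hG]; exact Or.inl ⟨r, a, rfl⟩, m', rfl, rfl⟩
    · intro a b c habc m'
      exact RingConGen.Rel.of _ _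
        ⟨MonoidAlgebra.single a 1 + MonoidAlgebra.single b 1 + MonoidAlgebra.single c 1,
          by rw [hG]; exact Or.inr ⟨a, b, c, habc, rfl⟩, m',
          by rw [MonoidAlgebra.coeff_add, MonoidAlgebra.coeff_add, MonoidAlgebra.coeff_single,
            MonoidAlgebra.coeff_single, MonoidAlgebra.coeff_single],
          by rw [MonoidAlgebra.coeff_add, MonoidAlgebra.coeff_add, MonoidAlgebra.coeff_single,
            MonoidAlgebra.coeff_single, MonoidAlgebra.coeff_single]⟩
  · refine RingCon.ringConGen_mono ?_
    rintro p q ⟨g, hg, m, rfl, rfl⟩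
    refine ⟨g, ?_, m, rfl, rfl⟩
    rw [hG] at hg
    rcases hg with ⟨r, a, rfl⟩ | ⟨a, b, c, habc, rfl⟩
    · rw [map_sub, MonoidAlgebra.lift_single, MonoidAlgebra.lift_single, one_smul,
        MonoidHom.id_apply, MonoidHom.id_apply, sub_self]
    · rw [map_add, map_add, MonoidAlgebra.lift_single, MonoidAlgebra.lift_single,
        MonoidAlgebra.lift_single, one_smul, one_smul, one_smul,
        MonoidHom.id_apply, MonoidHom.id_apply, MonoidHom.id_apply]
      exact habc
end

section
/- Let R be a commutative ring and A a commutative R-algebra. The kernel of the evaluation homomorphism ev : MonoidAlgebra R A →ₐ[R] A, regarded as an additive subgroup of MonoidAlgebra R A, equals the additive subgroup generated by the set of elements single a r − single (r • a) 1 for r ∈ R and a ∈ A, together with the elements single a 1 + single b 1 + single c 1 for a, b, c ∈ A with a + b + c = 0. -/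
/-- **Description of the kernel of the evaluation map.**
For a commutative ring `R` and a commutative `R`-algebra `A`, the kernel of the evaluation
homomorphism `ev : MonoidAlgebra R A → A` (determined by `ev xₐ = a`), regarded as an additive
subgroup, is generated by the elements `r·xₐ − x_{r•a}` (for `r ∈ R`, `a ∈ A`) and
`xₐ + x_b + x_c` (for `a, b, c ∈ A` with `a + b + c = 0`). -/
theorem ker_ev_eq_closure
    {R A : Type*} [CommRing R] [CommRing A] [Algebra R A] :
    (RingHom.ker (MonoidAlgebra.lift R A A (MonoidHom.id A) :
        MonoidAlgebra R A →ₐ[R] A).toRingHom).toAddSubgroup =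
      AddSubgroup.closure
        {g | (∃ (r : R) (a : A),
              g = MonoidAlgebra.single a r - MonoidAlgebra.single (r • a) 1) ∨
          ∃ a b c : A, a + b + c = 0 ∧
            g = MonoidAlgebra.single a 1 + MonoidAlgebra.single b 1 +
              MonoidAlgebra.single c 1} := by
  set ev := (MonoidAlgebra.lift R A A (MonoidHom.id A) : MonoidAlgebra R A →ₐ[R] A)
  set S := AddSubgroup.closure
        {g | (∃ (r : R) (a : A),
              g = MonoidAlgebra.single a r - MonoidAlgebra.single (r • a) 1) ∨
          ∃ a b c : A, a + b + c = 0 ∧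
            g = MonoidAlgebra.single a 1 + MonoidAlgebra.single b 1 +
              MonoidAlgebra.single c 1} with hS
  have hgen1 : ∀ (r : R) (a : A),
      MonoidAlgebra.single a r - MonoidAlgebra.single (r • a) (1:R) ∈ S := fun r a =>
    AddSubgroup.subset_closure (Or.inl ⟨r, a, rfl⟩)
  have hgen2 : ∀ a b c : A, a + b + c = 0 →
      MonoidAlgebra.single a (1:R) + MonoidAlgebra.single b 1 + MonoidAlgebra.single c 1 ∈ S :=
    fun a b c h => AddSubgroup.subset_closure (Or.inr ⟨a, b, c, h, rfl⟩)
  have h0 : MonoidAlgebra.single (0:A) (1:R) ∈ S := by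
    have := hgen1 0 0
    simp only [MonoidAlgebra.single_zero, smul_zero, zero_sub] at this
    simpa using S.neg_mem this
  have hadd : ∀ a b : A, MonoidAlgebra.single a (1:R) + MonoidAlgebra.single b 1
      - MonoidAlgebra.single (a + b) 1 ∈ S := by
    intro a b
    have t := hgen2 a b (-(a+b)) (by ring)
    have u := hgen2 (a+b) (-(a+b)) 0 (by ring)
    have heq : MonoidAlgebra.single a (1:R) + MonoidAlgebra.single b 1
        - MonoidAlgebra.single (a + b) 1
        = (MonoidAlgebra.single a (1:R) + MonoidAlgebra.single b 1
            + MonoidAlgebra.single (-(a+b)) 1)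
          - (MonoidAlgebra.single (a+b) (1:R) + MonoidAlgebra.single (-(a+b)) 1
            + MonoidAlgebra.single 0 1)
          + MonoidAlgebra.single (0:A) 1 := by abel
    rw [heq]
    exact S.add_mem (S.sub_mem t u) h0
  have hev : ∀ (a : A) (r : R), ev (MonoidAlgebra.single a r) = r • a := by
    intro a r
    simp [ev, MonoidAlgebra.lift_single]
  have hkey : ∀ f : MonoidAlgebra R A, f - MonoidAlgebra.single (ev f) 1 ∈ S := by
    intro f
    induction f using MonoidAlgebra.induction with
    | zero => simpa using S.neg_mem h0
    | single_add a r g _ _ ih =>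
      have hevsum : ev (MonoidAlgebra.single a r + g) = r • a + ev g := by
        rw [map_add, hev]
      have heq : MonoidAlgebra.single a r + g
          - MonoidAlgebra.single (ev (MonoidAlgebra.single a r + g)) (1:R)
          = (MonoidAlgebra.single a r - MonoidAlgebra.single (r • a) 1)
            + (g - MonoidAlgebra.single (ev g) 1)
            + (MonoidAlgebra.single (r • a) (1:R) + MonoidAlgebra.single (ev g) 1
                - MonoidAlgebra.single (r • a + ev g) 1) := by
        rw [hevsum]
        abel
      show MonoidAlgebra.single a r + g - MonoidAlgebra.single (ev (MonoidAlgebra.single a r + g)) (1:R) ∈ S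
      rw [heq]
      exact S.add_mem (S.add_mem (hgen1 r a) ih) (hadd _ _)
  ext f
  rw [Submodule.mem_toAddSubgroup, RingHom.mem_ker]
  constructor
  · intro hf
    have hf0 : ev f = 0 := hf
    have hk := hkey f
    rw [hf0] at hk
    simpa using S.add_mem hk h0
  · intro hf
    have hle : S ≤ (RingHom.ker ev.toRingHom).toAddSubgroup := by
      rw [hS]
      apply AddSubgroup.closure_le _ |>.2
      rintro g (⟨r, a, rfl⟩ | ⟨a, b, c, habc, rfl⟩) <;>
        · simp only [SetLike.mem_coe, Submodule.mem_toAddSubgroup, RingHom.mem_ker,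
            AlgHom.toRingHom_eq_coe, RingHom.coe_coe, map_sub, map_add]
          simp only [hev, one_smul]
          first
            | simp
            | rw [habc]
    exact (Submodule.mem_toAddSubgroup _).1 (hle hf)
end

section
/- Let Λ be a type and let 𝕋 := Tropical (WithTop ℝ) be the tropical semiring, equipped with the topology induced by Tropical.untrop from the order topology on WithTop ℝ. Then the topology on Λ → 𝕋 generated (TopologicalSpace.generateFrom) by the collection of sets {x : Λ → 𝕋 | MvPolynomial.eval x f = MvPolynomial.eval x g}ᶜ, for f, g ranging over MvPolynomial Λ 𝕋, equals the product topology. That is, the strong Zariski topology on tropical affine space 𝕋^Λ, whose closed sets are cut out by systems of equalities of tropical polynomials, coincides with the Euclidean (product) topology. -/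
/-- The Euclidean topology on `WithTop ℝ`: the order topology. -/
noncomputable instance : TopologicalSpace (WithTop ℝ) := Preorder.topology (WithTop ℝ)

instance : OrderTopology (WithTop ℝ) := ⟨rfl⟩

/-- The Euclidean topology on the tropical semiring `𝕋 = Tropical (WithTop ℝ)`, induced by
`untrop` from the order topology on `WithTop ℝ`. -/
noncomputable instance : TopologicalSpace (Tropical (WithTop ℝ)) :=
  TopologicalSpace.induced Tropical.untrop inferInstance

open Set Filter Topology Tropical TopologicalSpace MvPolynomial

theorem WithTopReal.isOpenEmbedding_coe : IsOpenEmbedding ((↑) : ℝ → WithTop ℝ) :=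
  ⟨WithTop.coe_strictMono.isEmbedding_of_ordConnected <| by
      rw [WithTop.range_coe]; exact ordConnected_Iio,
   by rw [WithTop.range_coe]; exact isOpen_Iio⟩

theorem WithTopReal.coe_add_lt {u v : ℝ} {x y : WithTop ℝ}
    (hx : (u : WithTop ℝ) < x) (hy : (v : WithTop ℝ) < y) :
    ((u + v : ℝ) : WithTop ℝ) < x + y := by
  cases x using WithTop.recTopCoe with
  | top => rw [WithTop.top_add]; exact WithTop.coe_lt_top _
  | coe a =>
    cases y using WithTop.recTopCoe with
    | top => rw [WithTop.add_top]; exact WithTop.coe_lt_top _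
    | coe b =>
      rw [← WithTop.coe_add, WithTop.coe_lt_coe] at *
      exact add_lt_add hx hy

theorem WithTopReal.continuousAt_add_top (b : WithTop ℝ) :
    ContinuousAt (fun p : WithTop ℝ × WithTop ℝ => p.1 + p.2) (⊤, b) := by
  obtain ⟨s, hs⟩ : ∃ s : ℝ, (s : WithTop ℝ) < b := by
    cases b using WithTop.recTopCoe with
    | top => exact ⟨0, WithTop.coe_lt_top 0⟩
    | coe b => exact ⟨b - 1, by exact_mod_cast sub_one_lt b⟩
  rw [ContinuousAt]
  show Tendsto _ _ (𝓝 (⊤ + b))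
  rw [WithTop.top_add, nhds_top_order]
  simp only [tendsto_iInf, tendsto_principal]
  intro l hl
  lift l to ℝ using hl.ne
  filter_upwards [prod_mem_nhds (isOpen_Ioi.mem_nhds (WithTop.coe_lt_top (l - s)))
    (isOpen_Ioi.mem_nhds hs)] with p hp
  have := WithTopReal.coe_add_lt hp.1 hp.2
  simpa using this

instance : ContinuousAdd (WithTop ℝ) := by
  refine ⟨continuous_iff_continuousAt.2 ?_⟩
  rintro ⟨a, b⟩
  cases a using WithTop.recTopCoe with
  | top => exact WithTopReal.continuousAt_add_top b
  | coe a =>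
    cases b using WithTop.recTopCoe with
    | top =>
      have hswap : ContinuousAt (Prod.swap : WithTop ℝ × WithTop ℝ → WithTop ℝ × WithTop ℝ)
          ((a : WithTop ℝ), (⊤ : WithTop ℝ)) := continuous_swap.continuousAt
      have h := ContinuousAt.comp (f := Prod.swap)
        (x := ((a : WithTop ℝ), (⊤ : WithTop ℝ)))
        (g := fun p : WithTop ℝ × WithTop ℝ => p.1 + p.2)
        (WithTopReal.continuousAt_add_top (a : WithTop ℝ)) hswap
      have e : ((fun p : WithTop ℝ × WithTop ℝ => p.1 + p.2) ∘ Prod.swap) =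
          fun p : WithTop ℝ × WithTop ℝ => p.1 + p.2 := by
        funext p; exact add_comm _ _
      rwa [e] at h
    | coe b =>
      rw [ContinuousAt]
      have hmap : 𝓝 (((a : WithTop ℝ)), (b : WithTop ℝ)) =
          Filter.map (Prod.map ((↑) : ℝ → WithTop ℝ) ((↑) : ℝ → WithTop ℝ)) (𝓝 (a, b)) :=
        ((WithTopReal.isOpenEmbedding_coe.prodMap
          WithTopReal.isOpenEmbedding_coe).map_nhds_eq (a, b)).symm
      rw [hmap, tendsto_map'_iff]
      have key : Tendsto (fun p : ℝ × ℝ => ((p.1 + p.2 : ℝ) : WithTop ℝ)) (𝓝 (a, b))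
          (𝓝 ((a + b : ℝ) : WithTop ℝ)) :=
        (WithTopReal.isOpenEmbedding_coe.continuous.tendsto _).comp
          ((continuous_add (M := ℝ)).tendsto (a, b))
      have : (((a : WithTop ℝ), (b : WithTop ℝ)).1 + ((a : WithTop ℝ), (b : WithTop ℝ)).2) =
          ((a + b : ℝ) : WithTop ℝ) := (WithTop.coe_add a b).symm
      rw [this]
      exact key.congr fun p => by simp [Prod.map, WithTop.coe_add]

theorem continuous_untrop : Continuous (untrop : Tropical (WithTop ℝ) → WithTop ℝ) :=
  continuous_induced_dom

theorem isEmbedding_untrop : IsEmbedding (untrop : Tropical (WithTop ℝ) → WithTop ℝ) :=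
  ⟨⟨rfl⟩, untrop_injective⟩

instance : T2Space (Tropical (WithTop ℝ)) := isEmbedding_untrop.t2Space

instance : ContinuousAdd (Tropical (WithTop ℝ)) := by
  refine ⟨continuous_induced_rng.2 ?_⟩
  have h : (untrop : Tropical (WithTop ℝ) → WithTop ℝ) ∘
      (fun p : Tropical (WithTop ℝ) × Tropical (WithTop ℝ) => p.1 + p.2) =
      fun p => min (untrop p.1) (untrop p.2) := by
    funext p; exact untrop_add p.1 p.2
  rw [h]
  exact (continuous_untrop.comp continuous_fst).min (continuous_untrop.comp continuous_snd)

instance : ContinuousMul (Tropical (WithTop ℝ)) := by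
  refine ⟨continuous_induced_rng.2 ?_⟩
  have h : (untrop : Tropical (WithTop ℝ) → WithTop ℝ) ∘
      (fun p : Tropical (WithTop ℝ) × Tropical (WithTop ℝ) => p.1 * p.2) =
      fun p => untrop p.1 + untrop p.2 := by
    funext p; exact untrop_mul p.1 p.2
  rw [h]
  exact (continuous_untrop.comp continuous_fst).add (continuous_untrop.comp continuous_snd)

instance : IsTopologicalSemiring (Tropical (WithTop ℝ)) := ⟨⟩

/-- **The strong Zariski topology on tropical affine space is the Euclidean topology.**
The topology on `𝕋^Λ` generated by the complements of the equalizer sets of pairs of tropical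
polynomials (the strong Zariski topology) coincides with the product (Euclidean) topology. -/
theorem strongZariskiTopology_eq_euclidean (Λ : Type*) :
    TopologicalSpace.generateFrom
        {s : Set (Λ → Tropical (WithTop ℝ)) |
          ∃ f g : MvPolynomial Λ (Tropical (WithTop ℝ)),
            s = {x : Λ → Tropical (WithTop ℝ) |
                  MvPolynomial.eval x f = MvPolynomial.eval x g}ᶜ} =
      (Pi.topologicalSpace : TopologicalSpace (Λ → Tropical (WithTop ℝ))) := by
  refine le_antisymm ?_ (le_generateFrom ?_)
  · -- Zariski finer than product: each subbasic product-open set is Zariski-open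
    refine le_iInf fun lam => ?_
    show TopologicalSpace.generateFrom _ ≤
      TopologicalSpace.induced (fun x : Λ → Tropical (WithTop ℝ) => x lam)
        (TopologicalSpace.induced untrop
          (TopologicalSpace.generateFrom
            {s : Set (WithTop ℝ) | ∃ a, s = {b | a < b} ∨ s = {b | b < a}}))
    rw [induced_compose]
    refine @le_induced_generateFrom _ _ (TopologicalSpace.generateFrom
      {s : Set (Λ → Tropical (WithTop ℝ)) |
        ∃ f g : MvPolynomial Λ (Tropical (WithTop ℝ)),
          s = {x : Λ → Tropical (WithTop ℝ) |
                MvPolynomial.eval x f = MvPolynomial.eval x g}ᶜ}) _ _ ?_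
    rintro t ⟨a, rfl | rfl⟩
    · -- preimage of (a, ∞) : {x | a < untrop (x lam)}
      refine isOpen_generateFrom_of_mem ⟨X lam + C (trop a), X lam, ?_⟩
      ext x
      simp only [mem_preimage, Function.comp_apply, mem_setOf_eq, mem_compl_iff,
        map_add, eval_X, eval_C]
      rw [← untrop_injective.eq_iff, untrop_add, untrop_trop, min_eq_left_iff, not_le]
    · -- preimage of (-∞, a) : {x | untrop (x lam) < a}
      refine isOpen_generateFrom_of_mem ⟨X lam + C (trop a), C (trop a), ?_⟩
      ext x
      simp only [mem_preimage, Function.comp_apply, mem_setOf_eq, mem_compl_iff,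
        map_add, eval_X, eval_C]
      rw [← untrop_injective.eq_iff, untrop_add, untrop_trop, min_eq_right_iff, not_le]
  · -- each Zariski subbasic open is product-open
    rintro s ⟨f, g, rfl⟩
    exact (isClosed_eq f.continuous_eval g.continuous_eval).isOpen_compl
end

section
/- Let T be a commutative semiring with idempotent addition (t + t = t for all t), A a commutative ring, and α : A → T a map satisfying α (a*b) = α a * α b for all a, b, α (-a) = α a for all a, and the subadditivity identity α a + α b + α (a+b) = α a + α b for all a, b ∈ A. Then for all a, b ∈ A one also has α a + α (a+b) = α a + α b and α b + α (a+b) = α a + α b. In other words, for a multiplicative, sign-invariant, subadditive map into an idempotent semiring, the remaining two bend equalities α(a)+α(a+b) = α(a)+α(b)+α(a+b) and α(b)+α(a+b) = α(a)+α(b)+α(a+b) are automatic. -/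
/-- **Redundancy of the remaining bend relations.**
For a multiplicative, sign-invariant, subadditive map `α : A → T` into an idempotent semiring,
the subadditivity identity `α a + α b + α (a+b) = α a + α b` implies the remaining two bend
equalities `α a + α (a+b) = α a + α b` and `α b + α (a+b) = α a + α b`. -/
theorem bend_relations_redundant
    {T : Type*} [CommSemiring T] (hT : ∀ t : T, t + t = t)
    {A : Type*} [CommRing A] (α : A → T)
    (hmul : ∀ a b : A, α (a * b) = α a * α b)
    (hneg : ∀ a : A, α (-a) = α a)
    (hadd : ∀ a b : A, α a + α b + α (a + b) = α a + α b) :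
    ∀ a b : A, α a + α (a + b) = α a + α b ∧ α b + α (a + b) = α a + α b := by
  intro a b
  have h1 := hadd (a + b) (-a)
  rw [show a + b + -a = b by ring, hneg] at h1
  have h2 := hadd (a + b) (-b)
  rw [show a + b + -b = a by ring, hneg] at h2
  have key := hadd a b
  constructor
  · calc α a + α (a + b) = α (a + b) + α a + α b := by rw [h1]; ring
      _ = α a + α b := by rw [← key]; ring_nf
  · calc α b + α (a + b) = α (a + b) + α b + α a := by rw [h2]; ring
      _ = α a + α b := by rw [← key]; ring_nf
end

section
/- Let S be a commutative semiring with idempotent addition (s + s = s for all s) and A a commutative ring. Let J be the congruence (RingCon) on MonoidAlgebra S A generated by the pairs (single a 1, single (-a) 1) for a ∈ A, together with all bend-relation pairs (p, p.erase m), m ∈ A, of the elements p = single a 1 + single b 1 + single (-(a+b)) 1 for a, b ∈ A. Then for every nonempty finite index set ι, every family b : ι → A with ∑ i, b i = 0, and every j ∈ ι, the congruence J relates ∑_{i ∈ ι} single (b i) 1 and ∑_{i ∈ ι, i ≠ j} single (b i) 1. -/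
open MonoidAlgebra

private lemma bend_single_idem {S A : Type*} [CommSemiring S] [CommRing A]
    (hS : ∀ s : S, s + s = s) (a : A) :
    (single a 1 + single a 1 : MonoidAlgebra S A) = single a 1 := by
  rw [← MonoidAlgebra.single_add, hS]

private lemma bend_aux_zero {S A : Type*} [CommSemiring S] [CommRing A]
    (hS : ∀ s : S, s + s = s) (J : RingCon (MonoidAlgebra S A))
    (hthree : ∀ a b m : A,
      J (single a 1 + single b 1 + single (-(a+b)) 1)
        ((single a 1 + single b 1 + single (-(a+b)) (1:S)).erase m)) :
    J (single (0:A) (1:S)) 0 := by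
  have hp : (single (0:A) (1:S) + single 0 1 + single (-(0+0)) 1 : MonoidAlgebra S A)
      = single 0 1 := by
    rw [add_zero, neg_zero, bend_single_idem hS, bend_single_idem hS]
  have h := hthree 0 0 0
  rw [hp, MonoidAlgebra.erase_single] at h
  exact h

private lemma bend_aux_L3 {S A : Type*} [CommSemiring S] [CommRing A]
    (hS : ∀ s : S, s + s = s) (J : RingCon (MonoidAlgebra S A))
    (hthree : ∀ a b m : A,
      J (single a 1 + single b 1 + single (-(a+b)) 1)
        ((single a 1 + single b 1 + single (-(a+b)) (1:S)).erase m))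
    (a b : A) :
    J (single a 1 + single b 1 + single (-(a+b)) (1:S))
      (single b 1 + single (-(a+b)) (1:S)) := by
  by_cases hab : a = b
  · subst hab
    rw [bend_single_idem hS]
    exact J.refl _
  by_cases hca : -(a+b) = a
  · have key : single a (1:S) + single b 1 + single a 1
        = (single b 1 + single a 1 : MonoidAlgebra S A) := by
      rw [add_right_comm, bend_single_idem hS, add_comm]
    rw [hca, key]
    exact J.refl _
  by_cases hcb : -(a+b) = b
  · rw [hcb, add_assoc, bend_single_idem hS]
    have h := hthree a b a
    have hp : (single a (1:S) + single b 1 + single (-(a+b)) 1 : MonoidAlgebra S A)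
        = single a 1 + single b 1 := by
      rw [hcb, add_assoc, bend_single_idem hS]
    have hq : ((single a (1:S) + single b 1 : MonoidAlgebra S A)).erase a
        = single b 1 := by
      ext x
      simp only [coeff_erase, coeff_add, coeff_single, Finsupp.erase_add, Finsupp.erase_single,
        Finsupp.erase_single_ne hab, zero_add]
    rw [hp, hq] at h
    exact h
  · have h := hthree a b a
    have hq : ((single a (1:S) + single b 1 + single (-(a+b)) 1 : MonoidAlgebra S A)).erase a
        = single b 1 + single (-(a+b)) 1 := by
      ext x
      simp only [coeff_erase, coeff_add, coeff_single, Finsupp.erase_add, Finsupp.erase_single,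
        Finsupp.erase_single_ne hab, Finsupp.erase_single_ne (Ne.symm hca), zero_add]
    rw [hq] at h
    exact h

private lemma bend_aux_main {S A : Type*} [CommSemiring S] [CommRing A]
    (hS : ∀ s : S, s + s = s) (J : RingCon (MonoidAlgebra S A))
    (hone : ∀ a : A, J (single a 1) (single (-a) (1:S)))
    (hthree : ∀ a b m : A,
      J (single a 1 + single b 1 + single (-(a+b)) 1)
        ((single a 1 + single b 1 + single (-(a+b)) (1:S)).erase m))
    (l : List A) : ∀ a : A, a + l.sum = 0 →
      J (single a (1:S) + (l.map (fun x => single x (1:S))).sum)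
        ((l.map (fun x => single x (1:S))).sum) := by
  induction l with
  | nil =>
      intro a ha
      have ha0 : a = 0 := by simpa using ha
      subst ha0
      simp only [List.map_nil, List.sum_nil, add_zero]
      exact bend_aux_zero hS J hthree
  | cons b t ih =>
      intro a ha
      have hc : (a + b) + t.sum = 0 := by
        rw [← ha, List.sum_cons]; ring
      have IH := ih (a + b) hc
      simp only [List.map_cons, List.sum_cons] at *
      refine J.trans (J.add (J.refl (single a (1:S)))
        (J.add (J.refl (single b (1:S))) (J.symm IH))) ?_
      refine J.trans (J.add (J.refl (single a (1:S)))
        (J.add (J.refl (single b (1:S)))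
          (J.add (hone (a+b)) (J.refl _)))) ?_
      have h3 := J.add (bend_aux_L3 hS J hthree a b)
        (J.refl ((t.map (fun x => single x (1:S))).sum))
      simp only [add_assoc] at h3
      refine J.trans h3 ?_
      refine J.trans (J.add (J.refl (single b (1:S)))
        (J.add (J.symm (hone (a+b))) (J.refl _))) ?_
      exact J.add (J.refl (single b (1:S))) IH

/-- **Key computation for the strong tropical basis.**
Let `S` be an idempotent semiring and `A` a commutative ring.  In the congruence `J` on
`MonoidAlgebra S A` generated by the relations `xₐ ∼ x₋ₐ` together with the bend relations of
the three-term elements `xₐ + x_b + x₋₍ₐ₊b₎`, every monic zero-sum combination `∑ᵢ x_{bᵢ}` with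
`∑ᵢ bᵢ = 0` is related to each of its bends `∑_{i ≠ j} x_{bᵢ}`. -/
theorem bend_of_zero_sum_in_three_term_congruence
    {S A : Type*} [CommSemiring S] [CommRing A]
    (hS : ∀ s : S, s + s = s)
    (J : RingCon (MonoidAlgebra S A))
    (hJ : J = ringConGen (fun (p q : MonoidAlgebra S A) =>
      (∃ a : A, p = MonoidAlgebra.single a 1 ∧ q = MonoidAlgebra.single (-a) 1) ∨
      (∃ a b : A, ∃ m : A,
        p = MonoidAlgebra.single a 1 + MonoidAlgebra.single b 1 +
              MonoidAlgebra.single (-(a + b)) 1 ∧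
        q = (MonoidAlgebra.single a 1 + MonoidAlgebra.single b 1 +
              MonoidAlgebra.single (-(a + b)) (1 : S)).erase m))) :
    ∀ (ι : Type) [Fintype ι] [Nonempty ι] [DecidableEq ι] (b : ι → A),
      (∑ i, b i) = 0 → ∀ j : ι,
        J (∑ i, MonoidAlgebra.single (b i) (1 : S))
          (∑ i ∈ Finset.univ.erase j, MonoidAlgebra.single (b i) (1 : S)) := by
  intro ι _ _ _ b hb j
  have hgen : ∀ p q : MonoidAlgebra S A,
      ((∃ a : A, p = MonoidAlgebra.single a 1 ∧ q = MonoidAlgebra.single (-a) 1) ∨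
      (∃ a b : A, ∃ m : A,
        p = MonoidAlgebra.single a 1 + MonoidAlgebra.single b 1 +
              MonoidAlgebra.single (-(a + b)) 1 ∧
        q = (MonoidAlgebra.single a 1 + MonoidAlgebra.single b 1 +
              MonoidAlgebra.single (-(a + b)) (1 : S)).erase m)) → J p q := by
    intro p q h
    rw [hJ]
    exact RingConGen.Rel.of p q h
  have hone : ∀ a : A, J (single a 1) (single (-a) (1:S)) :=
    fun a => hgen _ _ (Or.inl ⟨a, rfl, rfl⟩)
  have hthree : ∀ a c m : A,
      J (single a 1 + single c 1 + single (-(a+c)) 1)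
        ((single a 1 + single c 1 + single (-(a+c)) (1:S)).erase m) :=
    fun a c m => hgen _ _ (Or.inr ⟨a, c, m, rfl, rfl⟩)
  have hl : ∑ i ∈ Finset.univ.erase j, single (b i) (1:S)
      = (((Finset.univ.erase j).toList.map b).map (fun x => single x (1:S))).sum := by
    rw [List.map_map]
    exact (Finset.sum_map_toList _ _).symm
  have hz : b j + ((Finset.univ.erase j).toList.map b).sum = 0 := by
    rw [Finset.sum_map_toList, Finset.add_sum_erase _ b (Finset.mem_univ j)]
    exact hb
  rw [← Finset.add_sum_erase Finset.univ (fun i => single (b i) (1:S)) (Finset.mem_univ j), hl]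
  exact bend_aux_main hS _ hone hthree _ (b j) hz
end

section
/- Let R be a commutative ring and A a commutative R-algebra. For every finite index set ι and family b : ι → A, the element (∑_{i ∈ ι} single (b i) (1:R)) − single (∑_{i ∈ ι} b i) 1 of MonoidAlgebra R A lies in the additive subgroup generated by the element single 0 1 together with the elements single a 1 + single b 1 + single c 1 for a, b, c ∈ A with a + b + c = 0. -/
private lemma key_mem {R A : Type*} [CommRing R] [CommRing A] [Algebra R A] (x y : A) :
    (MonoidAlgebra.single x (1 : R) + MonoidAlgebra.single y 1 -
        MonoidAlgebra.single (x + y) 1) ∈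
      AddSubgroup.closure
        ({MonoidAlgebra.single (0 : A) (1 : R)} ∪
          {p | ∃ a b c : A, a + b + c = 0 ∧
            p = MonoidAlgebra.single a 1 + MonoidAlgebra.single b 1 +
                  MonoidAlgebra.single c 1}) := by
  have h1 : (MonoidAlgebra.single x (1 : R) + MonoidAlgebra.single y 1 +
      MonoidAlgebra.single (-(x + y)) 1) ∈
      AddSubgroup.closure
        ({MonoidAlgebra.single (0 : A) (1 : R)} ∪
          {p | ∃ a b c : A, a + b + c = 0 ∧
            p = MonoidAlgebra.single a 1 + MonoidAlgebra.single b 1 +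
                  MonoidAlgebra.single c 1}) :=
    AddSubgroup.subset_closure (Or.inr ⟨x, y, -(x + y), by ring, rfl⟩)
  have h2 : (MonoidAlgebra.single (x + y) (1 : R) + MonoidAlgebra.single (-(x + y)) 1 +
      MonoidAlgebra.single (0 : A) 1) ∈
      AddSubgroup.closure
        ({MonoidAlgebra.single (0 : A) (1 : R)} ∪
          {p | ∃ a b c : A, a + b + c = 0 ∧
            p = MonoidAlgebra.single a 1 + MonoidAlgebra.single b 1 +
                  MonoidAlgebra.single c 1}) :=
    AddSubgroup.subset_closure (Or.inr ⟨x + y, -(x + y), 0, by ring, rfl⟩)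
  have h3 : (MonoidAlgebra.single (0 : A) (1 : R)) ∈
      AddSubgroup.closure
        ({MonoidAlgebra.single (0 : A) (1 : R)} ∪
          {p | ∃ a b c : A, a + b + c = 0 ∧
            p = MonoidAlgebra.single a 1 + MonoidAlgebra.single b 1 +
                  MonoidAlgebra.single c 1}) :=
    AddSubgroup.subset_closure (Or.inl rfl)
  have := AddSubgroup.add_mem _ (AddSubgroup.sub_mem _ h1 h2) h3
  convert this using 1
  abel

private lemma finset_version {R A : Type*} [CommRing R] [CommRing A] [Algebra R A]
    {ι : Type*} [DecidableEq ι] (s : Finset ι) (b : ι → A) :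
    ((∑ i ∈ s, MonoidAlgebra.single (b i) (1 : R)) -
        MonoidAlgebra.single (∑ i ∈ s, b i) 1) ∈
      AddSubgroup.closure
        ({MonoidAlgebra.single (0 : A) (1 : R)} ∪
          {p | ∃ a b c : A, a + b + c = 0 ∧
            p = MonoidAlgebra.single a 1 + MonoidAlgebra.single b 1 +
                  MonoidAlgebra.single c 1}) := by
  induction s using Finset.induction_on with
  | empty =>
      simp only [Finset.sum_empty, zero_sub]
      exact AddSubgroup.neg_mem _ (AddSubgroup.subset_closure (Or.inl rfl))
  | insert _ _ hj ih =>
      rename_i j t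
      rw [Finset.sum_insert hj, Finset.sum_insert hj]
      have := AddSubgroup.add_mem _ (key_mem (R := R) (b j) (∑ i ∈ t, b i)) ih
      convert this using 1
      abel

/-- **Inductive reduction step in the description of `ker ev`.**
For a commutative ring `R` and a commutative `R`-algebra `A`, any element
`∑ᵢ x_{bᵢ} − x_{∑ᵢ bᵢ}` of `MonoidAlgebra R A` lies in the additive subgroup generated by
`x₀` together with the three-term relators `xₐ + x_b + x_c` with `a + b + c = 0`. -/
theorem sum_single_sub_single_sum_mem_closure
    {R A : Type*} [CommRing R] [CommRing A] [Algebra R A]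
    {ι : Type*} [Fintype ι] (b : ι → A) :
    ((∑ i, MonoidAlgebra.single (b i) (1 : R)) -
        MonoidAlgebra.single (∑ i, b i) 1) ∈
      AddSubgroup.closure
        ({MonoidAlgebra.single (0 : A) (1 : R)} ∪
          {p | ∃ a b c : A, a + b + c = 0 ∧
            p = MonoidAlgebra.single a 1 + MonoidAlgebra.single b 1 +
                  MonoidAlgebra.single c 1}) := by
  classical
  exact finset_version Finset.univ b
end

section
/- Let Λ be a type and let 𝕋 := Tropical (WithTop ℝ) be the tropical semiring, with its linear order. For every i ∈ Λ and every c ∈ 𝕋, the sets {x : Λ → 𝕋 | x i < c} and {x : Λ → 𝕋 | c < x i} belong to the topology on Λ → 𝕋 generated (TopologicalSpace.generateFrom) by the collection of sets {x : Λ → 𝕋 | MvPolynomial.eval x f = MvPolynomial.eval x g}ᶜ for f, g ∈ MvPolynomial Λ 𝕋. Explicitly, {x | x i < c} is the complement of the equalizer of the polynomials X i + C c and C c, and {x | c < x i} is the complement of the equalizer of X i + C c and X i. -/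
open MvPolynomial TopologicalSpace

/-- **Open rays are strong Zariski open in tropical affine space.**
Let `𝕋 = Tropical (WithTop ℝ)`.  For every coordinate `i` and constant `c`, the subbasic open
rays `{x | x i < c}` and `{x | c < x i}` of the Euclidean (product of order) topology on `𝕋^Λ`
belong to the topology generated by the complements of equalizer sets of pairs of tropical
polynomials; explicitly, `{x | x i < c}` is the complement of the equalizer of `X i + C c` and
`C c`, and `{x | c < x i}` is the complement of the equalizer of `X i + C c` and `X i`. -/
theorem rays_strong_zariski_open (Λ : Type*) (i : Λ) (c : Tropical (WithTop ℝ)) :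
    ((TopologicalSpace.generateFrom
        {s : Set (Λ → Tropical (WithTop ℝ)) |
          ∃ f g : MvPolynomial Λ (Tropical (WithTop ℝ)),
            s = {x : Λ → Tropical (WithTop ℝ) | eval x f = eval x g}ᶜ}).IsOpen
          {x : Λ → Tropical (WithTop ℝ) | x i < c} ∧
      (TopologicalSpace.generateFrom
        {s : Set (Λ → Tropical (WithTop ℝ)) |
          ∃ f g : MvPolynomial Λ (Tropical (WithTop ℝ)),
            s = {x : Λ → Tropical (WithTop ℝ) | eval x f = eval x g}ᶜ}).IsOpen
          {x : Λ → Tropical (WithTop ℝ) | c < x i}) ∧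
    {x : Λ → Tropical (WithTop ℝ) | x i < c} =
      ({x : Λ → Tropical (WithTop ℝ) | eval x (X i + C c) = eval x (C c)})ᶜ ∧
    {x : Λ → Tropical (WithTop ℝ) | c < x i} =
      ({x : Λ → Tropical (WithTop ℝ) | eval x (X i + C c) = eval x (X i)})ᶜ := by
  have h1 : {x : Λ → Tropical (WithTop ℝ) | x i < c} =
      ({x : Λ → Tropical (WithTop ℝ) | eval x (X i + C c) = eval x (C c)})ᶜ := by
    ext x
    simp [Tropical.add_eq_right_iff, not_le]
  have h2 : {x : Λ → Tropical (WithTop ℝ) | c < x i} =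
      ({x : Λ → Tropical (WithTop ℝ) | eval x (X i + C c) = eval x (X i)})ᶜ := by
    ext x
    simp [Tropical.add_eq_left_iff, not_le]
  refine ⟨⟨?_, ?_⟩, h1, h2⟩
  · rw [h1]; exact TopologicalSpace.GenerateOpen.basic _ ⟨_, _, rfl⟩
  · rw [h2]; exact TopologicalSpace.GenerateOpen.basic _ ⟨_, _, rfl⟩
end
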